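/- arXiv:1807.04123 — 6 statements merged into one kernel-verified Lean document; each statement's English description precedes it below -/
import Mathlib

section
/- Let ξ, η, ζ : ℝⁿ → ℝⁿ be smooth ℤⁿ-periodic vector fields with div ξ = 0. Then ∫_{[0,1]ⁿ} ⟨η(x), (∇_ξζ)(x) − (∇_ζξ)(x)⟩ dx = −∫_{[0,1]ⁿ} ⟨(∇_ξη)(x) + (ξ'⊗η)(x), ζ(x)⟩ dx. (This is the L²-pairing form of Lemma 1 of the paper: ad*(ξ)·μ̌(η) = −μ̌(∇_ξη + ξ'⊗η), equivalently ad⊤(ξ)·η = −P(∇_ξη + ξ'⊗η) paired against divergence-free ζ.) -/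
noncomputable section
open MeasureTheory

/-- Euclidean dot product on `Fin n → ℝ`. -/
def dotp {n : ℕ} (v w : Fin n → ℝ) : ℝ := ∑ i, v i * w i

/-- Advective derivative `(∇_X ξ)(x) = Dξ(x)·X(x)`. -/
def advDeriv {n : ℕ} (X ξ : (Fin n → ℝ) → (Fin n → ℝ)) (x : Fin n → ℝ) : Fin n → ℝ :=
  fderiv ℝ ξ x (X x)

/-- Line stretching term `(X'⊗ξ)(x) = (DX(x))ᵀ·ξ(x)`. -/
def lineStretch {n : ℕ} (X ξ : (Fin n → ℝ) → (Fin n → ℝ)) (x : Fin n → ℝ) : Fin n → ℝ :=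
  fun i => ∑ j, fderiv ℝ X x (Pi.single i 1) j * ξ x j

/-- Divergence of a vector field. -/
def diver {n : ℕ} (ξ : (Fin n → ℝ) → (Fin n → ℝ)) (x : Fin n → ℝ) : ℝ :=
  ∑ i, fderiv ℝ ξ x (Pi.single i 1) i

/-- Gradient of a scalar function. -/
def gradf {n : ℕ} (f : (Fin n → ℝ) → ℝ) (x : Fin n → ℝ) : Fin n → ℝ :=
  fun i => fderiv ℝ f x (Pi.single i 1)

/-- Componentwise Laplacian. -/
def lap {n : ℕ} (ξ : (Fin n → ℝ) → (Fin n → ℝ)) (x : Fin n → ℝ) : Fin n → ℝ :=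
  ∑ j, fderiv ℝ (fun y => fderiv ℝ ξ y (Pi.single j 1)) x (Pi.single j 1)

/-- The unit cube `[0,1]ⁿ`, realizing the torus `ℝⁿ/ℤⁿ`. -/
def cube (n : ℕ) : Set (Fin n → ℝ) := Set.univ.pi fun _ => Set.Icc (0:ℝ) 1

/-- `ℤⁿ`-periodicity. -/
def ZPeriodic {n : ℕ} {α : Type*} (f : (Fin n → ℝ) → α) : Prop :=
  ∀ (x : Fin n → ℝ) (m : Fin n → ℤ), f (x + fun i => (m i : ℝ)) = f x


lemma cube_eq (n : ℕ) : cube n = Set.Icc (0 : Fin n → ℝ) 1 := by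
  rw [cube, ← Set.pi_univ_Icc]; rfl

lemma integral_diver_zero {n : ℕ} (g : (Fin n → ℝ) → (Fin n → ℝ))
    (hg : ContDiff ℝ (⊤:ℕ∞) g) (hgp : ZPeriodic g) :
    ∫ x in cube n, diver g x = 0 := by
  match n with
  | 0 => simp [diver]
  | (m+1) =>
    rw [cube_eq]
    have hcont : Continuous (fun x => fderiv ℝ g x) :=
      (hg.fderiv_right (m := (⊤:ℕ∞)) (by exact_mod_cast le_rfl)).continuous
    have hdc : Continuous (fun x => diver g x) := by
      unfold diver
      exact continuous_finset_sum _ fun i _ =>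
        (continuous_apply i).comp ((hcont.clm_apply continuous_const))
    have key := integral_divergence_of_hasFDerivAt_off_countable (a := (0 : Fin (m+1) → ℝ))
      (b := 1) (fun i => zero_le_one) g (fun x => fderiv ℝ g x) ∅ Set.countable_empty
      hg.continuous.continuousOn
      (fun x _ => (hg.differentiable (by simp) x).hasFDerivAt)
      (hdc.continuousOn.integrableOn_compact isCompact_Icc)
    rw [show (∫ x in Set.Icc (0:Fin (m+1) → ℝ) 1, diver g x) = ∫ x in Set.Icc (0:Fin (m+1) → ℝ) 1, ∑ i, fderiv ℝ g x (Pi.single i 1) i from rfl, key]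
    apply Finset.sum_eq_zero
    intro i _
    have hface : ∀ x : Fin m → ℝ, g (i.insertNth ((1:Fin (m+1) → ℝ) i) x) i
        = g (i.insertNth ((0:Fin (m+1) → ℝ) i) x) i := by
      intro x
      have h1 : i.insertNth ((1:Fin (m+1) → ℝ) i) x
          = i.insertNth ((0:Fin (m+1) → ℝ) i) x + fun j => ((Pi.single i 1 : Fin (m+1) → ℤ) j : ℝ) := by
        funext j
        rcases eq_or_ne j i with rfl | hj
        · simp
        · rcases Fin.exists_succAbove_eq hj with ⟨k, rfl⟩
          simp [Pi.single_apply, hj]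
      rw [h1, hgp]
    rw [show (∫ x in Set.Icc ((0:Fin (m+1) → ℝ) ∘ i.succAbove) ((1:Fin (m+1) → ℝ) ∘ i.succAbove),
        g (i.insertNth ((1:Fin (m+1) → ℝ) i) x) i) = ∫ x in Set.Icc ((0:Fin (m+1) → ℝ) ∘ i.succAbove) ((1:Fin (m+1) → ℝ) ∘ i.succAbove),
        g (i.insertNth ((0:Fin (m+1) → ℝ) i) x) i from by simp only [hface], sub_self]

lemma clm_pi_apply {n : ℕ} (L : (Fin n → ℝ) →L[ℝ] (Fin n → ℝ)) (v : Fin n → ℝ) (k : Fin n) :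
    L v k = ∑ i, v i * L (Pi.single i 1) k := by
  have hv : v = ∑ i, v i • (Pi.single i 1 : Fin n → ℝ) := by
    funext j
    simp [Finset.sum_apply, Pi.single_apply, mul_comm]
  conv_lhs => rw [hv, map_sum]
  simp [Finset.sum_apply]

lemma alg {n : ℕ} (u v w : Fin n → ℝ) (A B C : Fin n → Fin n → ℝ) :
    (∑ k, u k * ((∑ i, w i * B i k) - (∑ i, v i * C i k)))
      + (∑ k, ((∑ i, w i * A i k) + ∑ j, C k j * u j) * v k)
    = ∑ i, (∑ k, (u k * B i k + v k * A i k)) * w i := by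
  simp only [mul_sub, Finset.mul_sum, add_mul, Finset.sum_mul, Finset.sum_sub_distrib,
    Finset.sum_add_distrib, Finset.sum_apply]
  rw [Finset.sum_comm (γ := Fin n) (f := fun k i => u k * (w i * B i k)),
      Finset.sum_comm (γ := Fin n) (f := fun k i => w i * A i k * v k),
      Finset.sum_comm (γ := Fin n) (f := fun k j => C k j * u j * v k)]
  ring_nf
  have h : (∑ x : Fin n, ∑ x_1 : Fin n, u x * v x_1 * C x_1 x)
      = ∑ y : Fin n, ∑ x : Fin n, C x y * u y * v x := by
    apply Finset.sum_congr rfl; intros; apply Finset.sum_congr rfl; intros; ring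
  rw [h, show ∀ a c d : ℝ, a - c + d + c = a + d from fun a c d => by ring]
  simp only [← Finset.sum_add_distrib]
  apply Finset.sum_congr rfl; intros
  apply Finset.sum_congr rfl; intros; ring

lemma pointwise {n : ℕ} (ξ η ζ : (Fin n → ℝ) → (Fin n → ℝ))
    (hξ : ContDiff ℝ (⊤:ℕ∞) ξ) (hη : ContDiff ℝ (⊤:ℕ∞) η) (hζ : ContDiff ℝ (⊤:ℕ∞) ζ)
    (hdiv : ∀ x, diver ξ x = 0) (x : Fin n → ℝ) :
    dotp (η x) (advDeriv ξ ζ x - advDeriv ζ ξ x)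
      + dotp (advDeriv ξ η x + lineStretch ξ η x) (ζ x)
    = diver (fun y => dotp (η y) (ζ y) • ξ y) x := by
  have one_le : (1:WithTop ℕ∞) ≤ ((⊤:ℕ∞):WithTop ℕ∞) := by exact_mod_cast le_top
  have hξx : HasFDerivAt ξ (fderiv ℝ ξ x) x :=
    (hξ.differentiable (by simp) x).hasFDerivAt
  have hηx : HasFDerivAt η (fderiv ℝ η x) x :=
    (hη.differentiable (by simp) x).hasFDerivAt
  have hζx : HasFDerivAt ζ (fderiv ℝ ζ x) x :=
    (hζ.differentiable (by simp) x).hasFDerivAt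
  set u := η x with hu
  set v := ζ x with hvv
  set w := ξ x with hw
  set A := fun i k => fderiv ℝ η x (Pi.single i 1) k with hA
  set B := fun i k => fderiv ℝ ζ x (Pi.single i 1) k with hB
  set C := fun i k => fderiv ℝ ξ x (Pi.single i 1) k with hC
  set F : (Fin n → ℝ) →L[ℝ] ℝ := ∑ k, (u k • ((ContinuousLinearMap.proj k).comp (fderiv ℝ ζ x))
      + v k • ((ContinuousLinearMap.proj k).comp (fderiv ℝ η x))) with hF
  have hf : HasFDerivAt (fun y => dotp (η y) (ζ y)) F x := by
    have : (fun y => dotp (η y) (ζ y)) = fun y => ∑ k, η y k * ζ y k := by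
      funext y; rfl
    rw [this, hF]
    apply HasFDerivAt.fun_sum
    intro k _
    exact ((ContinuousLinearMap.proj (R := ℝ) (φ := fun _ : Fin n => ℝ) k).hasFDerivAt.comp x hηx).mul
      ((ContinuousLinearMap.proj (R := ℝ) (φ := fun _ : Fin n => ℝ) k).hasFDerivAt.comp x hζx)
  have hg : HasFDerivAt (fun y => dotp (η y) (ζ y) • ξ y)
      (dotp u v • fderiv ℝ ξ x + F.smulRight w) x := hf.smul hξx
  have hdg : diver (fun y => dotp (η y) (ζ y) • ξ y) x
      = ∑ i, (dotp u v * C i i + (∑ k, (u k * B i k + v k * A i k)) * w i) := by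
    unfold diver
    rw [hg.fderiv]
    apply Finset.sum_congr rfl
    intro i _
    simp [F, ContinuousLinearMap.sum_apply, Finset.sum_apply, Finset.sum_mul,
      mul_comm, A, B, C]
  rw [hdg]
  have hdiv' : ∑ i, C i i = 0 := hdiv x
  have expand : ∀ (θ : (Fin n → ℝ) → (Fin n → ℝ)) (z : Fin n → ℝ) (k : Fin n),
      fderiv ℝ θ x z k = ∑ i, z i * fderiv ℝ θ x (Pi.single i 1) k := by
    intro θ z k; exact clm_pi_apply _ z k
  have lhs_eq : dotp (η x) (advDeriv ξ ζ x - advDeriv ζ ξ x)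
      + dotp (advDeriv ξ η x + lineStretch ξ η x) (ζ x)
      = (∑ k, u k * ((∑ i, w i * B i k) - (∑ i, v i * C i k)))
        + (∑ k, ((∑ i, w i * A i k) + ∑ j, C k j * u j) * v k) := by
    unfold dotp advDeriv lineStretch
    congr 1
    · apply Finset.sum_congr rfl; intro k _
      rw [Pi.sub_apply, expand ζ w k, expand ξ v k]
    · apply Finset.sum_congr rfl; intro k _
      rw [Pi.add_apply, expand η w k]
  rw [lhs_eq, alg u v w A B C]
  rw [Finset.sum_add_distrib, ← Finset.mul_sum, hdiv', mul_zero, zero_add]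

/-- L²-pairing form of Lemma 1 of the paper:
`∫ ⟨η, ∇_ξζ − ∇_ζξ⟩ = −∫ ⟨∇_ξη + ξ'⊗η, ζ⟩` on the torus, for smooth
ℤⁿ-periodic fields with `div ξ = 0`. -/
theorem stmt0 {n : ℕ} (ξ η ζ : (Fin n → ℝ) → (Fin n → ℝ))
    (hξ : ContDiff ℝ (⊤:ℕ∞) ξ) (hη : ContDiff ℝ (⊤:ℕ∞) η) (hζ : ContDiff ℝ (⊤:ℕ∞) ζ)
    (hξp : ZPeriodic ξ) (hηp : ZPeriodic η) (hζp : ZPeriodic ζ)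
    (hdiv : ∀ x, diver ξ x = 0) :
    ∫ x in cube n, dotp (η x) (advDeriv ξ ζ x - advDeriv ζ ξ x) =
      - ∫ x in cube n, dotp (advDeriv ξ η x + lineStretch ξ η x) (ζ x) := by
  have one_le : (1:WithTop ℕ∞) ≤ ((⊤:ℕ∞):WithTop ℕ∞) := by exact_mod_cast le_top
  have hfd : ∀ (θ : (Fin n → ℝ) → (Fin n → ℝ)), ContDiff ℝ (⊤:ℕ∞) θ →
      Continuous (fun x => fderiv ℝ θ x) := fun θ hθ =>
    (hθ.fderiv_right (m := (⊤:ℕ∞)) (by exact_mod_cast le_rfl)).continuous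
  have capp : ∀ (θ ψ : (Fin n → ℝ) → (Fin n → ℝ)), ContDiff ℝ (⊤:ℕ∞) θ → Continuous ψ →
      Continuous (fun x => fderiv ℝ θ x (ψ x)) := fun θ ψ hθ hψ =>
    (hfd θ hθ).clm_apply hψ
  have hL : Continuous (fun x => dotp (η x) (advDeriv ξ ζ x - advDeriv ζ ξ x)) := by
    unfold dotp advDeriv
    apply continuous_finset_sum; intro k _
    exact ((continuous_apply k).comp hη.continuous).mul ((continuous_apply k).comp
      ((capp ζ ξ hζ hξ.continuous).sub (capp ξ ζ hξ hζ.continuous)))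
  have hR : Continuous (fun x => dotp (advDeriv ξ η x + lineStretch ξ η x) (ζ x)) := by
    unfold dotp advDeriv lineStretch
    apply continuous_finset_sum; intro k _
    refine Continuous.mul ?_ ((continuous_apply k).comp hζ.continuous)
    refine Continuous.add ((continuous_apply k).comp (capp η ξ hη hξ.continuous)) ?_
    exact continuous_finset_sum _ fun j _ =>
      (((continuous_apply j).comp ((hfd ξ hξ).clm_apply continuous_const)).mul
        ((continuous_apply j).comp hη.continuous))
  have hcc : IsCompact (cube n) := by rw [cube_eq]; exact isCompact_Icc
  have hiL : IntegrableOn (fun x => dotp (η x) (advDeriv ξ ζ x - advDeriv ζ ξ x)) (cube n) :=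
    hL.continuousOn.integrableOn_compact hcc
  have hiR : IntegrableOn (fun x => dotp (advDeriv ξ η x + lineStretch ξ η x) (ζ x)) (cube n) :=
    hR.continuousOn.integrableOn_compact hcc
  have hgc : ContDiff ℝ (⊤:ℕ∞) (fun y => dotp (η y) (ζ y) • ξ y) := by
    refine ContDiff.fun_smul ?_ hξ
    have : (fun y => dotp (η y) (ζ y)) = fun y => ∑ k, η y k * ζ y k := by funext y; rfl
    rw [this]
    exact ContDiff.sum fun k _ => ContDiff.mul
      (by exact ((ContinuousLinearMap.proj k).contDiff).comp hη)
      (by exact ((ContinuousLinearMap.proj k).contDiff).comp hζ)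
  have hgp : ZPeriodic (fun y => dotp (η y) (ζ y) • ξ y) := by
    intro x m; simp only [hηp x m, hζp x m, hξp x m]
  have hzero := integral_diver_zero (fun y => dotp (η y) (ζ y) • ξ y) hgc hgp
  have hsum : (∫ x in cube n, dotp (η x) (advDeriv ξ ζ x - advDeriv ζ ξ x))
      + (∫ x in cube n, dotp (advDeriv ξ η x + lineStretch ξ η x) (ζ x)) = 0 := by
    rw [← integral_add hiL hiR]
    rw [show (fun x => dotp (η x) (advDeriv ξ ζ x - advDeriv ζ ξ x)
        + dotp (advDeriv ξ η x + lineStretch ξ η x) (ζ x))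
      = fun x => diver (fun y => dotp (η y) (ζ y) • ξ y) x from
        funext (pointwise ξ η ζ hξ hη hζ hdiv)]
    exact hzero
  linarith
end
end

section
/- Let k, v ∈ ℝⁿ with ⟨k,v⟩ = 0, and define A(x) = cos⟨k,x⟩ v and B(x) = sin⟨k,x⟩ v. Then for every C¹ vector field ξ : ℝⁿ → ℝⁿ and every x ∈ ℝⁿ: (∇_A(A'⊗ξ))(x) + (∇_B(B'⊗ξ))(x) = 0 (the pairwise cancellation underlying equation Σ_α ∇_{X_α}(X_α'⊗ξ) = 0 in the paper). -/
noncomputable section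
open MeasureTheory

def dL {n : ℕ} (k : Fin n → ℝ) : (Fin n → ℝ) →L[ℝ] ℝ :=
  ∑ i, (k i) • (ContinuousLinearMap.proj i : (Fin n → ℝ) →L[ℝ] ℝ)

lemma dL_apply {n : ℕ} (k h : Fin n → ℝ) : dL k h = dotp k h := by
  simp [dL, dotp, ContinuousLinearMap.sum_apply]

lemma hasFDerivAt_dotp {n : ℕ} (k : Fin n → ℝ) (x : Fin n → ℝ) :
    HasFDerivAt (fun y => dotp k y) (dL k) x := by
  have h : (fun y : Fin n → ℝ => dotp k y) = dL k := funext fun y => (dL_apply k y).symm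
  rw [h]; exact (dL k).hasFDerivAt

lemma hasFDerivAt_trig_smul {n : ℕ} (s : ℝ → ℝ) (s' : ℝ) (k v : Fin n → ℝ) (x : Fin n → ℝ)
    (hs : HasDerivAt s s' (dotp k x)) :
    HasFDerivAt (fun y => s (dotp k y) • v) ((s' • dL k).smulRight v) x := by
  have h1 : HasFDerivAt (fun y => s (dotp k y)) (s' • dL k) x :=
    hs.comp_hasFDerivAt x (hasFDerivAt_dotp k x)
  exact h1.smul_const v

lemma dotp_single {n : ℕ} (k : Fin n → ℝ) (i : Fin n) : dotp k (Pi.single i 1) = k i := by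
  simp [dotp, Pi.single_apply, mul_ite]

lemma dotp_smul_right {n : ℕ} (k v : Fin n → ℝ) (c : ℝ) : dotp k (c • v) = c * dotp k v := by
  simp [dotp, Finset.mul_sum, mul_comm, mul_left_comm]

lemma lineStretch_eq {n : ℕ} (s s' : ℝ → ℝ) (hs : ∀ t, HasDerivAt s (s' t) t)
    (k v : Fin n → ℝ) (ξ A : (Fin n → ℝ) → (Fin n → ℝ))
    (hA : ∀ y, A y = s (dotp k y) • v) :
    lineStretch A ξ = fun y => (s' (dotp k y) * dotp v (ξ y)) • k := by
  have hA' : A = fun y => s (dotp k y) • v := funext hA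
  funext y i
  have hfd : fderiv ℝ A y = ((s' (dotp k y)) • dL k).smulRight v := by
    rw [hA']
    exact (hasFDerivAt_trig_smul s (s' (dotp k y)) k v y (hs _)).fderiv
  simp only [lineStretch, hfd, ContinuousLinearMap.smulRight_apply,
    ContinuousLinearMap.smul_apply, dL_apply, dotp_single, Pi.smul_apply, smul_eq_mul]
  simp only [dotp, Finset.mul_sum, Finset.sum_mul]
  exact Finset.sum_congr rfl fun j _ => by ring

lemma adv_formula {n : ℕ} (p : ℝ → ℝ) (p' : ℝ) (k v w : Fin n → ℝ)
    (ξ : (Fin n → ℝ) → (Fin n → ℝ)) (hξ : ContDiff ℝ 1 ξ) (x : Fin n → ℝ)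
    (hp : HasDerivAt p p' (dotp k x)) :
    fderiv ℝ (fun y => (p (dotp k y) * dotp v (ξ y)) • k) x w
      = (p (dotp k x) * dotp v (fderiv ℝ ξ x w) + p' * dotp k w * dotp v (ξ x)) • k := by
  have hξd := (hξ.differentiable one_ne_zero x).hasFDerivAt
  have hc2 : HasFDerivAt (fun y => dotp v (ξ y)) ((dL v).comp (fderiv ℝ ξ x)) x := by
    have h : (fun y => dotp v (ξ y)) = fun y => dL v (ξ y) :=
      funext fun y => (dL_apply v (ξ y)).symm
    rw [h]; exact ((dL v).hasFDerivAt).comp x hξd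
  have hc1 : HasFDerivAt (fun y => p (dotp k y)) (p' • dL k) x :=
    hp.comp_hasFDerivAt x (hasFDerivAt_dotp k x)
  have hg : fderiv ℝ (fun y => (p (dotp k y) * dotp v (ξ y)) • k) x = _ :=
    ((hc1.mul hc2).smul_const k).fderiv
  rw [hg]
  simp only [ContinuousLinearMap.smulRight_apply, ContinuousLinearMap.add_apply,
    ContinuousLinearMap.smul_apply, ContinuousLinearMap.comp_apply, dL_apply, smul_eq_mul]
  congr 1
  ring

/-- the pairwise cancellation `∇_A(A'⊗ξ) + ∇_B(B'⊗ξ) = 0`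
underlying `Σ_α ∇_{X_α}(X_α'⊗ξ) = 0` in the paper. -/
theorem stmt3 {n : ℕ} (k v : Fin n → ℝ) (hkv : dotp k v = 0)
    (A B : (Fin n → ℝ) → (Fin n → ℝ))
    (hA : ∀ x, A x = Real.cos (dotp k x) • v)
    (hB : ∀ x, B x = Real.sin (dotp k x) • v)
    (ξ : (Fin n → ℝ) → (Fin n → ℝ)) (hξ : ContDiff ℝ 1 ξ) (x : Fin n → ℝ) :
    advDeriv A (lineStretch A ξ) x + advDeriv B (lineStretch B ξ) x = 0 := by
  have hLA := lineStretch_eq Real.cos (fun t => -Real.sin t)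
    (fun t => Real.hasDerivAt_cos t) k v ξ A hA
  have hLB := lineStretch_eq Real.sin Real.cos
    (fun t => Real.hasDerivAt_sin t) k v ξ B hB
  unfold advDeriv
  rw [hLA, hLB,
    adv_formula (fun t => -Real.sin t) (-Real.cos (dotp k x)) k v (A x) ξ hξ x
      ((Real.hasDerivAt_sin (dotp k x)).neg),
    adv_formula Real.cos (-Real.sin (dotp k x)) k v (B x) ξ hξ x
      (Real.hasDerivAt_cos (dotp k x)),
    hA x, hB x, dotp_smul_right k v, dotp_smul_right k v, hkv,
    (fderiv ℝ ξ x).map_smul, (fderiv ℝ ξ x).map_smul,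
    dotp_smul_right v _, dotp_smul_right v _, ← add_smul]
  have hz : -Real.sin (dotp k x) * (Real.cos (dotp k x) * dotp v (fderiv ℝ ξ x v)) +
      -Real.cos (dotp k x) * (Real.cos (dotp k x) * 0) * dotp v (ξ x) +
      (Real.cos (dotp k x) * (Real.sin (dotp k x) * dotp v (fderiv ℝ ξ x v)) +
      -Real.sin (dotp k x) * (Real.sin (dotp k x) * 0) * dotp v (ξ x)) = 0 := by ring
  rw [hz, zero_smul]
end
end

section
/- Let k, v ∈ ℝⁿ with ⟨k,v⟩ = 0, and define A(x) = cos⟨k,x⟩ v and B(x) = sin⟨k,x⟩ v. Then for every C² vector field ξ : ℝⁿ → ℝⁿ and every x ∈ ℝⁿ: (∇_A(∇_Aξ))(x) + (∇_B(∇_Bξ))(x) = D²ξ(x)(v, v), the second derivative of ξ at x evaluated twice in the direction v. -/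
noncomputable section
open MeasureTheory

set_option maxHeartbeats 1000000 in
/-- `∇_A(∇_Aξ) + ∇_B(∇_Bξ) = D²ξ(x)(v,v)`. -/
theorem stmt6 {n : ℕ} (k v : Fin n → ℝ) (hkv : dotp k v = 0)
    (A B : (Fin n → ℝ) → (Fin n → ℝ))
    (hA : ∀ x, A x = Real.cos (dotp k x) • v)
    (hB : ∀ x, B x = Real.sin (dotp k x) • v)
    (ξ : (Fin n → ℝ) → (Fin n → ℝ)) (hξ : ContDiff ℝ 2 ξ) (x : Fin n → ℝ) :
    advDeriv A (advDeriv A ξ) x + advDeriv B (advDeriv B ξ) x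
      = fderiv ℝ (fun y => fderiv ℝ ξ y v) x v := by
  classical
  -- the linear map y ↦ ⟨k, y⟩
  set L : (Fin n → ℝ) →L[ℝ] ℝ := ∑ i, k i • ContinuousLinearMap.proj i with hLdef
  have hL : ∀ y, L y = dotp k y := by
    intro y
    simp [hLdef, dotp, ContinuousLinearMap.sum_apply]
  have hdotfun : (fun y : Fin n → ℝ => dotp k y) = fun y => L y :=
    funext fun y => (hL y).symm
  have hdot : ∀ y, HasFDerivAt (fun y : Fin n → ℝ => dotp k y) L y := by
    intro y; rw [hdotfun]; exact L.hasFDerivAt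
  have hLv : L v = 0 := by rw [hL]; exact hkv
  have hLsmul : ∀ c : ℝ, L (c • v) = 0 := by
    intro c; rw [_root_.map_smul, hLv, smul_zero]
  -- derivatives of A and B
  have hAder : ∀ y, HasFDerivAt A
      (((-Real.sin (dotp k y)) • L).smulRight v) y := by
    intro y
    have h1 : HasFDerivAt (fun y : Fin n → ℝ => Real.cos (dotp k y))
        ((-Real.sin (dotp k y)) • L) y :=
      (Real.hasDerivAt_cos (dotp k y)).comp_hasFDerivAt y (hdot y)
    have h2 := h1.smul_const v
    have : A = fun y : Fin n → ℝ => Real.cos (dotp k y) • v := funext hA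
    rw [this]
    simpa using h2
  have hBder : ∀ y, HasFDerivAt B
      ((Real.cos (dotp k y) • L).smulRight v) y := by
    intro y
    have h1 : HasFDerivAt (fun y : Fin n → ℝ => Real.sin (dotp k y))
        (Real.cos (dotp k y) • L) y :=
      (Real.hasDerivAt_sin (dotp k y)).comp_hasFDerivAt y (hdot y)
    have h2 := h1.smul_const v
    have : B = fun y : Fin n → ℝ => Real.sin (dotp k y) • v := funext hB
    rw [this]
    simpa using h2
  -- second derivative of ξ
  set f2 := fderiv ℝ (fderiv ℝ ξ) x with hf2def
  have hC1 : ContDiff ℝ 1 (fun y => fderiv ℝ ξ y) := hξ.fderiv_right (by norm_num)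
  have hf2 : HasFDerivAt (fun y => fderiv ℝ ξ y) f2 x :=
    ((hC1.differentiable one_ne_zero) x).hasFDerivAt
  -- derivative of advDeriv A ξ at x
  have hgA : HasFDerivAt (advDeriv A ξ)
      ((fderiv ℝ ξ x).comp (((-Real.sin (dotp k x)) • L).smulRight v)
        + f2.flip (A x)) x := by
    have := hf2.clm_apply (hAder x)
    simpa [advDeriv] using this
  have hgB : HasFDerivAt (advDeriv B ξ)
      ((fderiv ℝ ξ x).comp ((Real.cos (dotp k x) • L).smulRight v)
        + f2.flip (B x)) x := by
    have := hf2.clm_apply (hBder x)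
    simpa [advDeriv] using this
  -- RHS derivative
  have hrhs : HasFDerivAt (fun y => fderiv ℝ ξ y v)
      ((fderiv ℝ ξ x).comp (0 : (Fin n → ℝ) →L[ℝ] (Fin n → ℝ)) + f2.flip v) x :=
    hf2.clm_apply (hasFDerivAt_const v x)
  have hrhs' : fderiv ℝ (fun y => fderiv ℝ ξ y v) x v = f2 v v := by
    rw [hrhs.fderiv]; simp
  set c := Real.cos (dotp k x) with hc
  set s := Real.sin (dotp k x) with hs
  have hAx : A x = c • v := hA x
  have hBx : B x = s • v := hB x
  have hLA : ∀ c' : ℝ, (((c') • L).smulRight v) (A x) = 0 := by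
    intro c'
    rw [hAx, ContinuousLinearMap.smulRight_apply, ContinuousLinearMap.smul_apply,
      hLsmul, smul_zero, zero_smul]
  have hLB : ∀ c' : ℝ, (((c') • L).smulRight v) (B x) = 0 := by
    intro c'
    rw [hBx, ContinuousLinearMap.smulRight_apply, ContinuousLinearMap.smul_apply,
      hLsmul, smul_zero, zero_smul]
  have e1 : advDeriv A (advDeriv A ξ) x = f2 (A x) (A x) := by
    have : advDeriv A (advDeriv A ξ) x = fderiv ℝ (advDeriv A ξ) x (A x) := rfl
    rw [this, hgA.fderiv]
    simp [hLA]
  have e2 : advDeriv B (advDeriv B ξ) x = f2 (B x) (B x) := by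
    have : advDeriv B (advDeriv B ξ) x = fderiv ℝ (advDeriv B ξ) x (B x) := rfl
    rw [this, hgB.fderiv]
    simp [hLB]
  rw [e1, e2, hrhs', hAx, hBx, _root_.map_smul, _root_.map_smul]
  simp only [ContinuousLinearMap.smul_apply, ContinuousLinearMap.map_smul, smul_smul]
  rw [← add_smul]
  have : c * c + s * s = 1 := by
    have := Real.sin_sq_add_cos_sq (dotp k x)
    nlinarith [this]
  rw [this, one_smul]
end
end

section
/- Let η ≥ 0, T > 0, and let u, w : [0,T] × ℝⁿ → ℝⁿ and p : [0,T] × ℝⁿ → ℝ be smooth and ℤⁿ-periodic in the space variable, with div u_t = 0 and div w_t = 0 for each t, satisfying ∂_t w = −∇_u w − u'⊗w − ∇p + ηΔw on [0,T] × ℝⁿ. Then the energy identity holds for all t ∈ [0,T]: d/dt (½ ∫_{[0,1]ⁿ} |w(t,x)|² dx) = −∫_{[0,1]ⁿ} ⟨(u'⊗w)(t,x), w(t,x)⟩ dx − η ∫_{[0,1]ⁿ} |Dw(t,x)|² dx, where |Dw|² is the squared Frobenius norm of the spatial Jacobian of w. -/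
noncomputable section
open MeasureTheory

lemma isCompact_cube (n : ℕ) : IsCompact (cube n) := by
  rw [cube_eq]; exact isCompact_Icc

lemma volume_cube (n : ℕ) : (volume (cube n)).toReal = 1 := by
  rw [cube_eq]
  rw [Real.volume_Icc_pi_toReal (by intro i; norm_num : (0 : Fin n → ℝ) ≤ 1)]
  simp

-- component of fderiv
lemma fderiv_apply_comp {n m : ℕ} {f : (Fin n → ℝ) → (Fin m → ℝ)} {x : Fin n → ℝ}
    (hf : DifferentiableAt ℝ f x) (v : Fin n → ℝ) (i : Fin m) :
    fderiv ℝ (fun y => f y i) x v = fderiv ℝ f x v i := by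
  have hc : ∀ j, DifferentiableAt ℝ (fun y => f y j) x := differentiableAt_pi.mp hf
  have h2 : fderiv ℝ (fun y j => f y j) x = ContinuousLinearMap.pi
      (fun j => fderiv ℝ (fun y => f y j) x) := fderiv_pi hc
  have h3 : fderiv ℝ f x = ContinuousLinearMap.pi
      (fun j => fderiv ℝ (fun y => f y j) x) := h2
  rw [h3]; rfl

-- derivative of dotp
lemma fderiv_dotp {n : ℕ} {f g : (Fin n → ℝ) → (Fin n → ℝ)} {x : Fin n → ℝ}
    (hf : Differentiable ℝ f) (hg : Differentiable ℝ g) (v : Fin n → ℝ) :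
    fderiv ℝ (fun y => dotp (f y) (g y)) x v
      = dotp (fderiv ℝ f x v) (g x) + dotp (f x) (fderiv ℝ g x v) := by
  have hfi : ∀ i : Fin n, DifferentiableAt ℝ (fun y => f y i) x :=
    differentiableAt_pi.mp (hf x)
  have hgi : ∀ i : Fin n, DifferentiableAt ℝ (fun y => g y i) x :=
    differentiableAt_pi.mp (hg x)
  have : (fun y => dotp (f y) (g y)) = fun y => ∑ i, (fun z => f z i * g z i) y := by
    funext y; simp [dotp]
  rw [this, fderiv_fun_sum (fun i _ => ((hfi i).fun_mul (hgi i)))]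
  rw [ContinuousLinearMap.sum_apply]
  simp only [fderiv_fun_mul (hfi _) (hgi _), ContinuousLinearMap.add_apply,
    ContinuousLinearMap.smul_apply, smul_eq_mul]
  rw [dotp, dotp, ← Finset.sum_add_distrib]
  congr 1; funext i
  rw [fderiv_apply_comp (hf x) v i, fderiv_apply_comp (hg x) v i]; ring

-- periodicity of fderiv
lemma zperiodic_fderiv {n : ℕ} {E : Type*} [NormedAddCommGroup E] [NormedSpace ℝ E]
    {f : (Fin n → ℝ) → E} (hper : ZPeriodic f) (hf : Differentiable ℝ f)
    (x : Fin n → ℝ) (m : Fin n → ℤ) :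
    fderiv ℝ f (x + fun i => (m i : ℝ)) = fderiv ℝ f x := by
  set c : Fin n → ℝ := fun i => (m i : ℝ)
  have htrans : HasFDerivAt (fun y : Fin n → ℝ => y + c)
      (ContinuousLinearMap.id ℝ (Fin n → ℝ)) x := (hasFDerivAt_id x).add_const c
  have h1 : HasFDerivAt (fun y => f (y + c)) (fderiv ℝ f (x + c)) x := by
    have := (hf (x + c)).hasFDerivAt.comp x htrans
    exact this
  have h2 : (fun y => f (y + c)) = f := funext fun y => hper y m
  rw [h2] at h1
  exact (h1.fderiv).symm


lemma wtop_le1 : (1 : WithTop ℕ∞) ≤ ((⊤:ℕ∞) : WithTop ℕ∞) := by exact_mod_cast le_top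
lemma wtop_ne0 : ((⊤:ℕ∞) : WithTop ℕ∞) ≠ 0 := by simp
lemma wtop_add1 : ((⊤:ℕ∞) : WithTop ℕ∞) + 1 ≤ ((⊤:ℕ∞) : WithTop ℕ∞) := by
  exact_mod_cast le_top

lemma contDiff_fderiv_apply {n m : ℕ} {f : (Fin n → ℝ) → (Fin m → ℝ)}
    (hf : ContDiff ℝ (⊤:ℕ∞) f) (v : Fin n → ℝ) :
    ContDiff ℝ (⊤:ℕ∞) (fun x => fderiv ℝ f x v) :=
  (hf.fderiv_right wtop_add1).clm_apply contDiff_const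

lemma contDiff_fderiv_apply' {n : ℕ} {f : (Fin n → ℝ) → ℝ}
    (hf : ContDiff ℝ (⊤:ℕ∞) f) (v : Fin n → ℝ) :
    ContDiff ℝ (⊤:ℕ∞) (fun x => fderiv ℝ f x v) :=
  (hf.fderiv_right wtop_add1).clm_apply contDiff_const

lemma integral_fderiv_single {n : ℕ} (f : (Fin n → ℝ) → ℝ)
    (hf : ContDiff ℝ (⊤:ℕ∞) f) (hper : ZPeriodic f) (i : Fin n) :
    ∫ x in cube n, fderiv ℝ f x (Pi.single i 1) = 0 := by
  cases n with
  | zero => exact i.elim0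
  | succ m =>
    classical
    set L : ℝ →L[ℝ] (Fin (m+1) → ℝ) :=
      ContinuousLinearMap.pi (Pi.single i (ContinuousLinearMap.id ℝ ℝ)) with hL
    have hLapp : ∀ (r : ℝ) (j : Fin (m+1)), L r j = if j = i then r else 0 := by
      intro r j
      rcases eq_or_ne j i with rfl | hji
      · simp [hL]
      · simp [hL, Pi.single_apply, hji]
    set V : (Fin (m+1) → ℝ) → (Fin (m+1) → ℝ) := fun x => L (f x) with hVdef
    set V' : (Fin (m+1) → ℝ) → (Fin (m+1) → ℝ) →L[ℝ] (Fin (m+1) → ℝ) :=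
      fun x => L.comp (fderiv ℝ f x) with hV'
    have hd : ∀ x, HasFDerivAt V (V' x) x := fun x =>
      (L.hasFDerivAt).comp x (hf.differentiable wtop_ne0 x).hasFDerivAt
    have hdiv : (fun x => ∑ j, V' x (Pi.single j 1) j)
        = fun x => fderiv ℝ f x (Pi.single i 1) := by
      funext x
      have h1 : ∀ j, V' x (Pi.single j 1) j
          = if j = i then fderiv ℝ f x (Pi.single j 1) else 0 := by
        intro j; rw [hV']; exact hLapp _ j
      simp only [h1]
      simp
    have hcont : Continuous fun x => fderiv ℝ f x (Pi.single i 1) :=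
      (contDiff_fderiv_apply' hf (Pi.single i 1)).continuous
    have hInt : IntegrableOn (fun x => ∑ j, V' x (Pi.single j 1) j)
        (Set.Icc (0 : Fin (m+1) → ℝ) 1) := by
      rw [hdiv]
      exact hcont.continuousOn.integrableOn_compact isCompact_Icc
    have key := MeasureTheory.integral_divergence_of_hasFDerivAt_off_countable
      (a := (0 : Fin (m+1) → ℝ)) (b := (1 : Fin (m+1) → ℝ))
      (fun j => by norm_num) V V' ∅ Set.countable_empty
      (L.continuous.comp hf.continuous).continuousOn
      (fun x _ => hd x) hInt
    have hzero : ∀ j : Fin (m+1),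
        ((∫ x in Set.Icc ((0 : Fin (m+1) → ℝ) ∘ j.succAbove) ((1 : Fin (m+1) → ℝ) ∘ j.succAbove),
            V (j.insertNth ((1 : Fin (m+1) → ℝ) j) x) j) -
          ∫ x in Set.Icc ((0 : Fin (m+1) → ℝ) ∘ j.succAbove) ((1 : Fin (m+1) → ℝ) ∘ j.succAbove),
            V (j.insertNth ((0 : Fin (m+1) → ℝ) j) x) j) = 0 := by
      intro j
      rcases eq_or_ne j i with rfl | hji
      · -- top and bottom faces agree by periodicity
        have hfq : ∀ x : Fin m → ℝ,
            V (j.insertNth ((1 : Fin (m+1) → ℝ) j) x) j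
              = V (j.insertNth ((0 : Fin (m+1) → ℝ) j) x) j := by
          intro x
          have hvec : j.insertNth ((1 : Fin (m+1) → ℝ) j) x
              = j.insertNth ((0 : Fin (m+1) → ℝ) j) x
                + fun k => (((Pi.single j 1 : Fin (m+1) → ℤ) k : ℝ)) := by
            funext k
            refine Fin.succAboveCases j ?_ ?_ k
            · simp
            · intro l
              simp [Fin.insertNth_apply_succAbove,
                Pi.single_eq_of_ne (Fin.succAbove_ne j l)]
          rw [hvec, hVdef]
          simp only []
          rw [hper _ (Pi.single j 1)]
        rw [MeasureTheory.setIntegral_congr_fun measurableSet_Icc (fun x _ => hfq x), sub_self]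
      · -- component j of V vanishes
        have hVj : ∀ y, V y j = 0 := fun y => by
          rw [hVdef]; simp only []; rw [hLapp]; simp [hji]
        simp [hVj]
    rw [cube_eq, ← hdiv, key, Finset.sum_congr rfl (fun j _ => hzero j), Finset.sum_const_zero]

lemma dotp_comm {n : ℕ} (v w : Fin n → ℝ) : dotp v w = dotp w v := by
  unfold dotp; exact Finset.sum_congr rfl fun i _ => mul_comm _ _

lemma dotp_add_left {n : ℕ} (v w z : Fin n → ℝ) :
    dotp (v + w) z = dotp v z + dotp w z := by
  unfold dotp; rw [← Finset.sum_add_distrib]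
  exact Finset.sum_congr rfl fun i _ => by simp [add_mul]

lemma dotp_neg_left {n : ℕ} (v z : Fin n → ℝ) : dotp (-v) z = -dotp v z := by
  unfold dotp; rw [← Finset.sum_neg_distrib]
  exact Finset.sum_congr rfl fun i _ => by simp

lemma dotp_sub_left {n : ℕ} (v w z : Fin n → ℝ) :
    dotp (v - w) z = dotp v z - dotp w z := by
  rw [sub_eq_add_neg, dotp_add_left, dotp_neg_left, sub_eq_add_neg]

lemma dotp_smul_left {n : ℕ} (r : ℝ) (v z : Fin n → ℝ) :
    dotp (r • v) z = r * dotp v z := by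
  unfold dotp; rw [Finset.mul_sum]
  exact Finset.sum_congr rfl fun i _ => by simp [mul_assoc]

lemma dotp_sum_left {n : ℕ} {ι : Type*} (s : Finset ι) (f : ι → (Fin n → ℝ))
    (z : Fin n → ℝ) : dotp (∑ i ∈ s, f i) z = ∑ i ∈ s, dotp (f i) z := by
  unfold dotp
  rw [Finset.sum_comm]
  refine Finset.sum_congr rfl fun j _ => ?_
  rw [Finset.sum_apply, Finset.sum_mul]

lemma Differentiable.dotp_comp {n : ℕ} {f g : (Fin n → ℝ) → (Fin n → ℝ)}
    (hf : Differentiable ℝ f) (hg : Differentiable ℝ g) :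
    Differentiable ℝ (fun y => dotp (f y) (g y)) := by
  unfold dotp
  refine Differentiable.fun_sum fun i _ => Differentiable.fun_mul ?_ ?_
  · intro x; exact differentiableAt_pi.mp (hf x) i
  · intro x; exact differentiableAt_pi.mp (hg x) i

lemma pi_decomp {n : ℕ} (v : Fin n → ℝ) :
    v = ∑ i, v i • (Pi.single i (1:ℝ) : Fin n → ℝ) := by
  funext k
  rw [Finset.sum_apply]
  simp [Pi.single_apply]

lemma fderiv_mul_apply {n : ℕ} {f g : (Fin n → ℝ) → ℝ} {x : Fin n → ℝ}
    (hf : DifferentiableAt ℝ f x) (hg : DifferentiableAt ℝ g x) (v : Fin n → ℝ) :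
    fderiv ℝ (fun y => f y * g y) x v
      = fderiv ℝ f x v * g x + f x * fderiv ℝ g x v := by
  rw [fderiv_fun_mul hf hg]
  simp only [ContinuousLinearMap.add_apply, ContinuousLinearMap.smul_apply, smul_eq_mul]
  ring

lemma pointwise_identity {n : ℕ} (η : ℝ) (U W : (Fin n → ℝ) → (Fin n → ℝ))
    (P : (Fin n → ℝ) → ℝ)
    (hU : ContDiff ℝ (⊤:ℕ∞) U) (hW : ContDiff ℝ (⊤:ℕ∞) W) (hP : ContDiff ℝ (⊤:ℕ∞) P)
    (hdU : ∀ x, diver U x = 0) (hdW : ∀ x, diver W x = 0) (x : Fin n → ℝ) :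
    ∑ i, fderiv ℝ (fun y =>
        -((1/2) * dotp (W y) (W y) * U y i) - P y * W y i
          + η * dotp (fderiv ℝ W y (Pi.single i 1)) (W y)) x (Pi.single i 1)
      = dotp (-advDeriv U W x - lineStretch U W x - gradf P x + η • lap W x) (W x)
        + dotp (lineStretch U W x) (W x)
        + η * ∑ i, dotp (fderiv ℝ W x (Pi.single i 1)) (fderiv ℝ W x (Pi.single i 1)) := by
  have dW : Differentiable ℝ W := hW.differentiable wtop_ne0
  have dU : Differentiable ℝ U := hU.differentiable wtop_ne0
  have dP : Differentiable ℝ P := hP.differentiable wtop_ne0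
  have dWi : ∀ i, Differentiable ℝ (fun y => W y i) := fun i y =>
    differentiableAt_pi.mp (dW y) i
  have dUi : ∀ i, Differentiable ℝ (fun y => U y i) := fun i y =>
    differentiableAt_pi.mp (dU y) i
  have dc : Differentiable ℝ (fun y => (1/2 : ℝ) * dotp (W y) (W y)) :=
    (dW.dotp_comp dW).const_mul _
  have dg : ∀ i : Fin n, Differentiable ℝ (fun y => fderiv ℝ W y (Pi.single i 1)) :=
    fun i => (contDiff_fderiv_apply hW _).differentiable wtop_ne0
  -- derivative of the kinetic density
  have hdc : ∀ v, fderiv ℝ (fun y => (1/2 : ℝ) * dotp (W y) (W y)) x v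
      = dotp (fderiv ℝ W x v) (W x) := by
    intro v
    rw [fderiv_const_mul ((dW.dotp_comp dW) x)]
    rw [ContinuousLinearMap.smul_apply, smul_eq_mul, fderiv_dotp dW dW v]
    rw [dotp_comm (W x) (fderiv ℝ W x v)]
    ring
  -- expand each summand
  have key : ∀ i : Fin n, fderiv ℝ (fun y =>
        -((1/2) * dotp (W y) (W y) * U y i) - P y * W y i
          + η * dotp (fderiv ℝ W y (Pi.single i 1)) (W y)) x (Pi.single i 1)
      = -(dotp (fderiv ℝ W x (Pi.single i 1)) (W x) * U x i
            + ((1/2) * dotp (W x) (W x)) * fderiv ℝ (fun y => U y i) x (Pi.single i 1))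
        - (fderiv ℝ P x (Pi.single i 1) * W x i
            + P x * fderiv ℝ (fun y => W y i) x (Pi.single i 1))
        + η * (dotp (fderiv ℝ (fun y => fderiv ℝ W y (Pi.single i 1)) x (Pi.single i 1)) (W x)
            + dotp (fderiv ℝ W x (Pi.single i 1)) (fderiv ℝ W x (Pi.single i 1))) := by
    intro i
    have hA : DifferentiableAt ℝ (fun y => -((1/2 : ℝ) * dotp (W y) (W y) * U y i)) x :=
      ((dc.mul (dUi i)).neg) x
    have hB : DifferentiableAt ℝ (fun y => P y * W y i) x := (dP.mul (dWi i)) x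
    have hC : DifferentiableAt ℝ
        (fun y => η * dotp (fderiv ℝ W y (Pi.single i 1)) (W y)) x :=
      (((dg i).dotp_comp dW).const_mul η) x
    rw [fderiv_fun_add (hA.fun_sub hB) hC, ContinuousLinearMap.add_apply,
      fderiv_fun_sub hA hB, ContinuousLinearMap.sub_apply,
      fderiv_fun_neg, ContinuousLinearMap.neg_apply,
      fderiv_mul_apply (dc x) (dUi i x), hdc,
      fderiv_mul_apply (dP x) (dWi i x),
      fderiv_const_mul (((dg i).dotp_comp dW) x), ContinuousLinearMap.smul_apply,
      smul_eq_mul, fderiv_dotp (dg i) dW]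
  rw [Finset.sum_congr rfl fun i _ => key i]
  -- split the sums
  have split : ∀ (a b c d e f : Fin n → ℝ),
      (∑ i, (-(a i + b i) - (c i + d i) + η * (e i + f i)))
        = -(∑ i, a i) - (∑ i, b i) - (∑ i, c i) - (∑ i, d i)
          + η * (∑ i, e i) + η * (∑ i, f i) := by
    intro a b c d e f
    rw [Finset.sum_add_distrib]
    rw [Finset.sum_sub_distrib, Finset.sum_add_distrib, Finset.sum_neg_distrib,
      Finset.sum_add_distrib, ← Finset.mul_sum, Finset.sum_add_distrib]
    ring
  rw [split]
  -- identify each sum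
  have hadv : (∑ i, dotp (fderiv ℝ W x (Pi.single i 1)) (W x) * U x i)
      = dotp (advDeriv U W x) (W x) := by
    unfold advDeriv
    conv_rhs => rw [pi_decomp (U x)]
    rw [map_sum, dotp_sum_left]
    refine Finset.sum_congr rfl fun i _ => ?_
    rw [ContinuousLinearMap.map_smul, dotp_smul_left]
    ring
  have hdivU : (∑ i, ((1/2 : ℝ) * dotp (W x) (W x)) * fderiv ℝ (fun y => U y i) x (Pi.single i 1))
      = 0 := by
    rw [← Finset.mul_sum]
    have : (∑ i, fderiv ℝ (fun y => U y i) x (Pi.single i 1)) = diver U x := by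
      unfold diver
      exact Finset.sum_congr rfl fun i _ => fderiv_apply_comp (dU x) _ i
    rw [this, hdU x, mul_zero]
  have hgrad : (∑ i, fderiv ℝ P x (Pi.single i 1) * W x i) = dotp (gradf P x) (W x) := by
    unfold gradf dotp
    rfl
  have hdivW : (∑ i, P x * fderiv ℝ (fun y => W y i) x (Pi.single i 1)) = 0 := by
    rw [← Finset.mul_sum]
    have : (∑ i, fderiv ℝ (fun y => W y i) x (Pi.single i 1)) = diver W x := by
      unfold diver
      exact Finset.sum_congr rfl fun i _ => fderiv_apply_comp (dW x) _ i
    rw [this, hdW x, mul_zero]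
  have hlap : (∑ i, dotp (fderiv ℝ (fun y => fderiv ℝ W y (Pi.single i 1)) x
        (Pi.single i 1)) (W x)) = dotp (lap W x) (W x) := by
    unfold lap
    rw [dotp_sum_left]
  rw [hadv, hdivU, hgrad, hdivW, hlap]
  rw [dotp_add_left, dotp_sub_left, dotp_sub_left, dotp_neg_left, dotp_smul_left]
  ring

lemma hasDerivWithinAt_param_integral {n : ℕ} {T : ℝ} (hT : 0 < T)
    (G : ℝ × (Fin n → ℝ) → ℝ)
    (hG : ContDiffOn ℝ (⊤:ℕ∞) G (Set.Icc 0 T ×ˢ Set.univ))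
    {t : ℝ} (ht : t ∈ Set.Icc (0:ℝ) T) :
    HasDerivWithinAt (fun τ => ∫ x in cube n, G (τ, x))
      (∫ x in cube n,
        fderivWithin ℝ G (Set.Icc 0 T ×ˢ Set.univ) (t, x) (1, 0))
      (Set.Icc 0 T) t := by
  set S : Set (ℝ × (Fin n → ℝ)) := Set.Icc 0 T ×ˢ Set.univ with hSdef
  set ψ : ℝ × (Fin n → ℝ) → ℝ := fun q => fderivWithin ℝ G S q (1, 0) with hψdef
  have hSu : UniqueDiffOn ℝ S := (uniqueDiffOn_Icc hT).prod uniqueDiffOn_univ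
  have hGd : DifferentiableOn ℝ G S := hG.differentiableOn wtop_ne0
  have hψc : ContinuousOn ψ S :=
    (hG.continuousOn_fderivWithin hSu wtop_le1).clm_apply continuousOn_const
  set K : Set (ℝ × (Fin n → ℝ)) := Set.Icc 0 T ×ˢ cube n with hKdef
  have hKS : K ⊆ S := Set.prod_mono le_rfl (Set.subset_univ _)
  have hK : IsCompact K := isCompact_Icc.prod (isCompact_cube n)
  have hUC := hK.uniformContinuousOn_of_continuous (hψc.mono hKS)
  -- pointwise time-derivative within the interval
  have hGder : ∀ s ∈ Set.Icc (0:ℝ) T, ∀ x : Fin n → ℝ,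
      HasDerivWithinAt (fun τ => G (τ, x)) (ψ (s, x)) (Set.Icc 0 T) s := by
    intro s hs x
    have hι : HasDerivAt (fun τ : ℝ => ((τ, x) : ℝ × (Fin n → ℝ))) (1, 0) s :=
      (hasDerivAt_id s).prodMk (hasDerivAt_const s x)
    have hm : Set.MapsTo (fun τ : ℝ => ((τ, x) : ℝ × (Fin n → ℝ))) (Set.Icc 0 T) S := fun τ hτ => ⟨hτ, trivial⟩
    have := (hGd (s, x) ⟨hs, trivial⟩).hasFDerivWithinAt.comp_hasDerivWithinAt s
      hι.hasDerivWithinAt hm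
    exact this
  -- integrability of slices
  have hslice : ∀ s ∈ Set.Icc (0:ℝ) T, ContinuousOn (fun x => G (s, x)) (cube n) := by
    intro s hs
    exact hG.continuousOn.comp
      ((continuous_const.prodMk continuous_id).continuousOn)
      (fun x _ => ⟨hs, trivial⟩)
  have hGint : ∀ s ∈ Set.Icc (0:ℝ) T, IntegrableOn (fun x => G (s, x)) (cube n) :=
    fun s hs => (hslice s hs).integrableOn_compact (isCompact_cube n)
  have hψslice : ContinuousOn (fun x => ψ (t, x)) (cube n) :=
    hψc.comp ((continuous_const.prodMk continuous_id).continuousOn)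
      (fun x _ => ⟨ht, trivial⟩)
  have hψint : IntegrableOn (fun x => ψ (t, x)) (cube n) :=
    hψslice.integrableOn_compact (isCompact_cube n)
  have hvolfin : volume (cube n) < ⊤ := (isCompact_cube n).measure_lt_top
  rw [hasDerivWithinAt_iff_tendsto_slope]
  rw [Metric.tendsto_nhdsWithin_nhds]
  intro ε hε
  obtain ⟨δ, hδ, hδε⟩ := Metric.uniformContinuousOn_iff.mp hUC (ε/2) (by positivity)
  refine ⟨δ, hδ, ?_⟩
  intro τ hτ hdist
  have hτI : τ ∈ Set.Icc (0:ℝ) T := hτ.1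
  have hτt : τ ≠ t := by
    intro h; exact hτ.2 (by simp [h])
  have hne : τ - t ≠ 0 := sub_ne_zero.mpr hτt
  -- the key pointwise bound on the cube
  have hkey : ∀ x ∈ cube n,
      ‖G (τ, x) - G (t, x) - (τ - t) * ψ (t, x)‖ ≤ ε/2 * |τ - t| := by
    intro x hx
    set J : Set ℝ := Set.Icc (min t τ) (max t τ) with hJdef
    have hJsub : J ⊆ Set.Icc 0 T :=
      Set.Icc_subset_Icc (le_min ht.1 hτI.1) (max_le ht.2 hτI.2)
    have htJ : t ∈ J := ⟨min_le_left _ _, le_max_left _ _⟩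
    have hτJ : τ ∈ J := ⟨min_le_right _ _, le_max_right _ _⟩
    have hg : ∀ s ∈ J, HasDerivWithinAt (fun s' => G (s', x) - s' * ψ (t, x))
        (ψ (s, x) - ψ (t, x)) J s := by
      intro s hs
      exact ((hGder s (hJsub hs) x).mono hJsub).sub
        ((hasDerivAt_mul_const (ψ (t, x))).hasDerivWithinAt)
    have hbound : ∀ s ∈ J, ‖ψ (s, x) - ψ (t, x)‖ ≤ ε/2 := by
      intro s hs
      have hdistident : dist ((s, x) : ℝ × (Fin n → ℝ)) (t, x) = dist s t := by
        rw [Prod.dist_eq]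
        simp only [dist_self]
        exact max_eq_left dist_nonneg
      have h2 : dist s t ≤ dist τ t := by
        have h3 := Real.dist_le_of_mem_Icc (hJdef ▸ hs) htJ
        have h4 : t ⊔ τ - t ⊓ τ = dist τ t := by
          rw [Real.dist_eq, ← max_sub_min_eq_abs, max_comm, min_comm]
        linarith
      have := hδε (s, x) ⟨hJsub hs, hx⟩ (t, x) ⟨ht, hx⟩
        (by rw [hdistident]; exact lt_of_le_of_lt h2 hdist)
      rw [dist_eq_norm] at this
      exact this.le
    have hmvt := (convex_Icc _ _).norm_image_sub_le_of_norm_hasDerivWithin_le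
      hg hbound htJ hτJ
    have hrearr : (G (τ, x) - τ * ψ (t, x)) - (G (t, x) - t * ψ (t, x))
        = G (τ, x) - G (t, x) - (τ - t) * ψ (t, x) := by ring
    rw [hrearr] at hmvt
    calc ‖G (τ, x) - G (t, x) - (τ - t) * ψ (t, x)‖
        ≤ ε/2 * ‖τ - t‖ := hmvt
      _ = ε/2 * |τ - t| := by rw [Real.norm_eq_abs]
  -- assemble the integral estimate
  have hintdiff : (∫ x in cube n, (G (τ, x) - G (t, x) - (τ - t) * ψ (t, x)))
      = (∫ x in cube n, G (τ, x)) - (∫ x in cube n, G (t, x))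
        - (τ - t) * (∫ x in cube n, ψ (t, x)) := by
    have h1 : IntegrableOn (fun x => G (τ, x) - G (t, x)) (cube n) :=
      (hGint τ hτI).sub (hGint t ht)
    have h2 : IntegrableOn (fun x => (τ - t) * ψ (t, x)) (cube n) :=
      hψint.const_mul (τ - t)
    rw [MeasureTheory.integral_sub h1 h2,
      MeasureTheory.integral_sub (hGint τ hτI) (hGint t ht),
      MeasureTheory.integral_const_mul]
  have hnorm : ‖(∫ x in cube n, G (τ, x)) - (∫ x in cube n, G (t, x))
      - (τ - t) * (∫ x in cube n, ψ (t, x))‖ ≤ ε/2 * |τ - t| := by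
    rw [← hintdiff]
    have := MeasureTheory.norm_setIntegral_le_of_norm_le_const (μ := volume)
      hvolfin hkey
    calc ‖∫ x in cube n, (G (τ, x) - G (t, x) - (τ - t) * ψ (t, x))‖
        ≤ ε/2 * |τ - t| * (volume (cube n)).toReal := this
      _ = ε/2 * |τ - t| := by rw [volume_cube, mul_one]
  -- conclude for the slope
  rw [dist_eq_norm]
  have hslope : slope (fun τ => ∫ x in cube n, G (τ, x)) t τ
      - (∫ x in cube n, ψ (t, x))
      = (τ - t)⁻¹ * ((∫ x in cube n, G (τ, x)) - (∫ x in cube n, G (t, x))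
          - (τ - t) * (∫ x in cube n, ψ (t, x))) := by
    rw [slope_def_field]
    field_simp
    try ring
  rw [hslope, norm_mul, Real.norm_eq_abs, abs_inv]
  calc |τ - t|⁻¹ * ‖(∫ x in cube n, G (τ, x)) - (∫ x in cube n, G (t, x))
        - (τ - t) * (∫ x in cube n, ψ (t, x))‖
      ≤ |τ - t|⁻¹ * (ε/2 * |τ - t|) := by
        apply mul_le_mul_of_nonneg_left hnorm (by positivity)
    _ = ε/2 := by
        have habs : |τ - t| ≠ 0 := abs_ne_zero.mpr hne
        field_simp
    _ < ε := by linarith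

lemma slice_smooth {n : ℕ} {T : ℝ} {E : Type*} [NormedAddCommGroup E] [NormedSpace ℝ E]
    {f : ℝ → (Fin n → ℝ) → E}
    (hf : ContDiffOn ℝ (⊤:ℕ∞) (fun q : ℝ × (Fin n → ℝ) => f q.1 q.2)
      (Set.Icc 0 T ×ˢ Set.univ))
    {t : ℝ} (ht : t ∈ Set.Icc (0:ℝ) T) : ContDiff ℝ (⊤:ℕ∞) (f t) := by
  rw [← contDiffOn_univ]
  have hι : ContDiff ℝ (⊤:ℕ∞) (fun x : Fin n → ℝ => ((t, x) : ℝ × (Fin n → ℝ))) :=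
    contDiff_const.prodMk contDiff_id
  exact hf.comp hι.contDiffOn (fun x _ => ⟨ht, trivial⟩)

lemma ContDiff.dotp_comp {n : ℕ} {f g : (Fin n → ℝ) → (Fin n → ℝ)}
    (hf : ContDiff ℝ (⊤:ℕ∞) f) (hg : ContDiff ℝ (⊤:ℕ∞) g) :
    ContDiff ℝ (⊤:ℕ∞) (fun y => dotp (f y) (g y)) := by
  unfold dotp
  exact ContDiff.sum fun i _ => (contDiff_pi.mp hf i).mul (contDiff_pi.mp hg i)

lemma Continuous.dotp_comp {n : ℕ} {f g : (Fin n → ℝ) → (Fin n → ℝ)}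
    (hf : Continuous f) (hg : Continuous g) :
    Continuous (fun y => dotp (f y) (g y)) := by
  unfold dotp
  exact continuous_finset_sum _ fun i _ =>
    ((continuous_apply i).comp hf).mul ((continuous_apply i).comp hg)

theorem stmt13' {n : ℕ} (η T : ℝ) (hη : 0 ≤ η) (hT : 0 < T)
    (u w : ℝ → (Fin n → ℝ) → (Fin n → ℝ)) (p : ℝ → (Fin n → ℝ) → ℝ)
    (hu : ContDiffOn ℝ (⊤:ℕ∞) (fun q : ℝ × (Fin n → ℝ) => u q.1 q.2)
      (Set.Icc 0 T ×ˢ Set.univ))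
    (hw : ContDiffOn ℝ (⊤:ℕ∞) (fun q : ℝ × (Fin n → ℝ) => w q.1 q.2)
      (Set.Icc 0 T ×ˢ Set.univ))
    (hp : ContDiffOn ℝ (⊤:ℕ∞) (fun q : ℝ × (Fin n → ℝ) => p q.1 q.2)
      (Set.Icc 0 T ×ˢ Set.univ))
    (hup : ∀ t ∈ Set.Icc (0:ℝ) T, ZPeriodic (u t))
    (hwp : ∀ t ∈ Set.Icc (0:ℝ) T, ZPeriodic (w t))
    (hpp : ∀ t ∈ Set.Icc (0:ℝ) T, ZPeriodic (p t))
    (hdivu : ∀ t ∈ Set.Icc (0:ℝ) T, ∀ x, diver (u t) x = 0)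
    (hdivw : ∀ t ∈ Set.Icc (0:ℝ) T, ∀ x, diver (w t) x = 0)
    (hpde : ∀ t ∈ Set.Icc (0:ℝ) T, ∀ x,
      derivWithin (fun τ => w τ x) (Set.Icc 0 T) t
        = -advDeriv (u t) (w t) x - lineStretch (u t) (w t) x - gradf (p t) x
          + η • lap (w t) x) :
    ∀ t ∈ Set.Icc (0:ℝ) T,
      HasDerivWithinAt (fun τ => (1/2 : ℝ) * ∫ x in cube n, dotp (w τ x) (w τ x))
        (-(∫ x in cube n, dotp (lineStretch (u t) (w t) x) (w t x))
          - η * ∫ x in cube n, ∑ i, dotp (fderiv ℝ (w t) x (Pi.single i 1))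
              (fderiv ℝ (w t) x (Pi.single i 1)))
        (Set.Icc 0 T) t := by
  intro t ht
  set S : Set (ℝ × (Fin n → ℝ)) := Set.Icc 0 T ×ˢ Set.univ with hSdef
  -- smoothness of time slices
  have hUsm : ContDiff ℝ (⊤:ℕ∞) (u t) := slice_smooth hu ht
  have hWsm : ContDiff ℝ (⊤:ℕ∞) (w t) := slice_smooth hw ht
  have hPsm : ContDiff ℝ (⊤:ℕ∞) (p t) := slice_smooth hp ht
  have dW : Differentiable ℝ (w t) := hWsm.differentiable wtop_ne0
  -- the energy density as a function of (time, space)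
  set G : ℝ × (Fin n → ℝ) → ℝ :=
    fun q => (1/2 : ℝ) * dotp (w q.1 q.2) (w q.1 q.2) with hGdef
  have hwiq : ∀ i, ContDiffOn ℝ (⊤:ℕ∞) (fun q : ℝ × (Fin n → ℝ) => w q.1 q.2 i) S := by
    intro i
    have := (ContinuousLinearMap.proj (R := ℝ) (φ := fun _ : Fin n => ℝ)
      i).contDiff.comp_contDiffOn hw
    exact this
  have hGsm : ContDiffOn ℝ (⊤:ℕ∞) G S := by
    have : ContDiffOn ℝ (⊤:ℕ∞)
        (fun q : ℝ × (Fin n → ℝ) => (1/2 : ℝ) * ∑ i, w q.1 q.2 i * w q.1 q.2 i) S :=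
      contDiffOn_const.mul (ContDiffOn.sum fun i _ => (hwiq i).mul (hwiq i))
    exact this
  have step1 := hasDerivWithinAt_param_integral hT G hGsm ht
  -- identify the functions
  have hfun_eq : (fun τ => (1/2 : ℝ) * ∫ x in cube n, dotp (w τ x) (w τ x))
      = fun τ => ∫ x in cube n, G (τ, x) := by
    funext τ
    rw [hGdef, MeasureTheory.integral_const_mul]
  -- identify the derivative pointwise
  have huniq : UniqueDiffWithinAt ℝ (Set.Icc (0:ℝ) T) t := (uniqueDiffOn_Icc hT) t ht
  have hGd : DifferentiableOn ℝ G S := hGsm.differentiableOn wtop_ne0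
  have hpsi : ∀ x : Fin n → ℝ, fderivWithin ℝ G S (t, x) (1, 0)
      = dotp (-advDeriv (u t) (w t) x - lineStretch (u t) (w t) x - gradf (p t) x
          + η • lap (w t) x) (w t x) := by
    intro x
    have hι : HasDerivAt (fun τ : ℝ => ((τ, x) : ℝ × (Fin n → ℝ))) (1, 0) t :=
      (hasDerivAt_id t).prodMk (hasDerivAt_const t x)
    have hm : Set.MapsTo (fun τ : ℝ => ((τ, x) : ℝ × (Fin n → ℝ))) (Set.Icc 0 T) S := fun τ hτ => ⟨hτ, trivial⟩
    have h1 : HasDerivWithinAt (fun τ => G (τ, x))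
        (fderivWithin ℝ G S (t, x) (1, 0)) (Set.Icc 0 T) t := by
      have := (hGd (t, x) ⟨ht, trivial⟩).hasFDerivWithinAt.comp_hasDerivWithinAt t
        hι.hasDerivWithinAt hm
      exact this
    -- derivative of τ ↦ w τ x within the time interval
    have hdwx : DifferentiableWithinAt ℝ (fun τ => w τ x) (Set.Icc 0 T) t := by
      have hF := (hw.differentiableOn wtop_ne0) (t, x) ⟨ht, trivial⟩
      exact hF.comp t (((differentiable_id.prodMk (differentiable_const x) :
          Differentiable ℝ (fun τ : ℝ => ((τ, x) : ℝ × (Fin n → ℝ))))) t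
        |>.differentiableWithinAt) hm
    have hdw : HasDerivWithinAt (fun τ => w τ x)
        (derivWithin (fun τ => w τ x) (Set.Icc 0 T) t) (Set.Icc 0 T) t :=
      hdwx.hasDerivWithinAt
    have hdwi : ∀ i, HasDerivWithinAt (fun τ => w τ x i)
        (derivWithin (fun τ => w τ x) (Set.Icc 0 T) t i) (Set.Icc 0 T) t := by
      intro i
      have := (ContinuousLinearMap.proj (R := ℝ) (φ := fun _ : Fin n => ℝ)
        i).hasFDerivAt.comp_hasDerivWithinAt t hdw
      exact this
    have h2' : HasDerivWithinAt (fun τ => ∑ i, w τ x i * w τ x i)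
        (∑ i, (derivWithin (fun τ => w τ x) (Set.Icc 0 T) t i * w t x i
          + w t x i * derivWithin (fun τ => w τ x) (Set.Icc 0 T) t i)) (Set.Icc 0 T) t :=
      HasDerivWithinAt.fun_sum fun i _ => (hdwi i).mul (hdwi i)
    have h2 : HasDerivWithinAt (fun τ => G (τ, x))
        (dotp (derivWithin (fun τ => w τ x) (Set.Icc 0 T) t) (w t x))
        (Set.Icc 0 T) t := by
      have h3 := h2'.const_mul (1/2 : ℝ)
      have hvaleq : (1/2 : ℝ) * (∑ i, (derivWithin (fun τ => w τ x) (Set.Icc 0 T) t i * w t x i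
          + w t x i * derivWithin (fun τ => w τ x) (Set.Icc 0 T) t i))
          = dotp (derivWithin (fun τ => w τ x) (Set.Icc 0 T) t) (w t x) := by
        unfold dotp
        rw [Finset.sum_congr rfl ((fun i _ => by
          ring) : ∀ i ∈ Finset.univ, (derivWithin (fun τ => w τ x) (Set.Icc 0 T) t i * w t x i
          + w t x i * derivWithin (fun τ => w τ x) (Set.Icc 0 T) t i)
            = 2 * (derivWithin (fun τ => w τ x) (Set.Icc 0 T) t i * w t x i)),
          ← Finset.mul_sum]
        ring
      rw [← hvaleq]
      exact h3
    have := h1.derivWithin huniq ▸ h2.derivWithin huniq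
    rw [← hpde t ht x]
    exact this.symm ▸ rfl
  -- divergence-free slices
  have hdU : ∀ x, diver (u t) x = 0 := hdivu t ht
  have hdW : ∀ x, diver (w t) x = 0 := hdivw t ht
  -- smoothness and periodicity of the flux integrands
  have hhsm : ∀ i : Fin n, ContDiff ℝ (⊤:ℕ∞) (fun y =>
      -((1/2) * dotp (w t y) (w t y) * u t y i) - p t y * w t y i
        + η * dotp (fderiv ℝ (w t) y (Pi.single i 1)) (w t y)) := by
    intro i
    refine ContDiff.add (ContDiff.sub (ContDiff.neg ?_) ?_) ?_
    · exact (contDiff_const.mul (hWsm.dotp_comp hWsm)).mul (contDiff_pi.mp hUsm i)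
    · exact hPsm.mul (contDiff_pi.mp hWsm i)
    · exact contDiff_const.mul
        ((contDiff_fderiv_apply hWsm (Pi.single i 1)).dotp_comp hWsm)
  have hper : ∀ i : Fin n, ZPeriodic (fun y =>
      -((1/2) * dotp (w t y) (w t y) * u t y i) - p t y * w t y i
        + η * dotp (fderiv ℝ (w t) y (Pi.single i 1)) (w t y)) := by
    intro i x m
    have h1 := hwp t ht x m
    have h2 := hup t ht x m
    have h3 := hpp t ht x m
    have h4 := zperiodic_fderiv (hwp t ht) dW x m
    simp only [h1, h2, h3, h4]
  -- continuity of the various integrands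
  have hAc : ∀ i : Fin n, Continuous (fun x => fderiv ℝ (fun y =>
      -((1/2) * dotp (w t y) (w t y) * u t y i) - p t y * w t y i
        + η * dotp (fderiv ℝ (w t) y (Pi.single i 1)) (w t y)) x (Pi.single i 1)) :=
    fun i => (contDiff_fderiv_apply' (hhsm i) (Pi.single i 1)).continuous
  have hAint : ∀ i : Fin n, IntegrableOn (fun x => fderiv ℝ (fun y =>
      -((1/2) * dotp (w t y) (w t y) * u t y i) - p t y * w t y i
        + η * dotp (fderiv ℝ (w t) y (Pi.single i 1)) (w t y)) x (Pi.single i 1)) (cube n) :=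
    fun i => (hAc i).continuousOn.integrableOn_compact (isCompact_cube n)
  have hlsc : Continuous (lineStretch (u t) (w t)) := by
    unfold lineStretch
    refine continuous_pi fun i => continuous_finset_sum _ fun j _ => Continuous.mul ?_ ?_
    · exact (continuous_apply j).comp (contDiff_fderiv_apply hUsm (Pi.single i 1)).continuous
    · exact (continuous_apply j).comp hWsm.continuous
  have hLc : Continuous (fun x => dotp (lineStretch (u t) (w t) x) (w t x)) :=
    hlsc.dotp_comp hWsm.continuous
  have hLint : IntegrableOn (fun x => dotp (lineStretch (u t) (w t) x) (w t x)) (cube n) :=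
    hLc.continuousOn.integrableOn_compact (isCompact_cube n)
  have hDc : Continuous (fun x => ∑ i, dotp (fderiv ℝ (w t) x (Pi.single i 1))
      (fderiv ℝ (w t) x (Pi.single i 1))) :=
    continuous_finset_sum _ fun i _ =>
      (contDiff_fderiv_apply hWsm (Pi.single i 1)).continuous.dotp_comp
        (contDiff_fderiv_apply hWsm (Pi.single i 1)).continuous
  have hDint : IntegrableOn (fun x => ∑ i, dotp (fderiv ℝ (w t) x (Pi.single i 1))
      (fderiv ℝ (w t) x (Pi.single i 1))) (cube n) :=
    hDc.continuousOn.integrableOn_compact (isCompact_cube n)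
  -- compute the value of the derivative
  have hval : (∫ x in cube n, fderivWithin ℝ G S (t, x) (1, 0))
      = -(∫ x in cube n, dotp (lineStretch (u t) (w t) x) (w t x))
        - η * ∫ x in cube n, ∑ i, dotp (fderiv ℝ (w t) x (Pi.single i 1))
            (fderiv ℝ (w t) x (Pi.single i 1)) := by
    have hpt : ∀ x : Fin n → ℝ, fderivWithin ℝ G S (t, x) (1, 0)
        = (∑ i, fderiv ℝ (fun y =>
            -((1/2) * dotp (w t y) (w t y) * u t y i) - p t y * w t y i
              + η * dotp (fderiv ℝ (w t) y (Pi.single i 1)) (w t y)) x (Pi.single i 1))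
          - (dotp (lineStretch (u t) (w t) x) (w t x)
            + η * ∑ i, dotp (fderiv ℝ (w t) x (Pi.single i 1))
              (fderiv ℝ (w t) x (Pi.single i 1))) := by
      intro x
      have hid := pointwise_identity η (u t) (w t) (p t) hUsm hWsm hPsm hdU hdW x
      rw [hpsi x]
      linarith
    simp only [hpt]
    have hD2 : IntegrableOn (fun x => η * ∑ i, dotp (fderiv ℝ (w t) x (Pi.single i 1))
        (fderiv ℝ (w t) x (Pi.single i 1))) (cube n) := hDint.const_mul η
    have hB : IntegrableOn (fun x => dotp (lineStretch (u t) (w t) x) (w t x)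
        + η * ∑ i, dotp (fderiv ℝ (w t) x (Pi.single i 1))
          (fderiv ℝ (w t) x (Pi.single i 1))) (cube n) := hLint.add hD2
    rw [MeasureTheory.integral_sub
      (MeasureTheory.integrable_finset_sum _ (fun i _ => hAint i)) hB,
      MeasureTheory.integral_finset_sum _ (fun i _ => hAint i),
      Finset.sum_congr rfl (fun i _ => integral_fderiv_single _ (hhsm i) (hper i) i),
      MeasureTheory.integral_add hLint hD2,
      MeasureTheory.integral_const_mul, Finset.sum_const_zero]
    ring
  rw [hfun_eq, ← hval]
  exact step1

/-- energy identity for the linearized equation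
`∂_t w = −∇_u w − u'⊗w − ∇p + ηΔw` with divergence-free, spatially
ℤⁿ-periodic data:
`d/dt (½∫|w|²) = −∫⟨u'⊗w, w⟩ − η∫|Dw|²` on `[0,T]`. -/
theorem stmt13 {n : ℕ} (η T : ℝ) (hη : 0 ≤ η) (hT : 0 < T)
    (u w : ℝ → (Fin n → ℝ) → (Fin n → ℝ)) (p : ℝ → (Fin n → ℝ) → ℝ)
    (hu : ContDiffOn ℝ (⊤:ℕ∞) (fun q : ℝ × (Fin n → ℝ) => u q.1 q.2)
      (Set.Icc 0 T ×ˢ Set.univ))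
    (hw : ContDiffOn ℝ (⊤:ℕ∞) (fun q : ℝ × (Fin n → ℝ) => w q.1 q.2)
      (Set.Icc 0 T ×ˢ Set.univ))
    (hp : ContDiffOn ℝ (⊤:ℕ∞) (fun q : ℝ × (Fin n → ℝ) => p q.1 q.2)
      (Set.Icc 0 T ×ˢ Set.univ))
    (hup : ∀ t ∈ Set.Icc (0:ℝ) T, ZPeriodic (u t))
    (hwp : ∀ t ∈ Set.Icc (0:ℝ) T, ZPeriodic (w t))
    (hpp : ∀ t ∈ Set.Icc (0:ℝ) T, ZPeriodic (p t))
    (hdivu : ∀ t ∈ Set.Icc (0:ℝ) T, ∀ x, diver (u t) x = 0)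
    (hdivw : ∀ t ∈ Set.Icc (0:ℝ) T, ∀ x, diver (w t) x = 0)
    (hpde : ∀ t ∈ Set.Icc (0:ℝ) T, ∀ x,
      derivWithin (fun τ => w τ x) (Set.Icc 0 T) t
        = -advDeriv (u t) (w t) x - lineStretch (u t) (w t) x - gradf (p t) x
          + η • lap (w t) x) :
    ∀ t ∈ Set.Icc (0:ℝ) T,
      HasDerivWithinAt (fun τ => (1/2 : ℝ) * ∫ x in cube n, dotp (w τ x) (w τ x))
        (-(∫ x in cube n, dotp (lineStretch (u t) (w t) x) (w t x))
          - η * ∫ x in cube n, ∑ i, dotp (fderiv ℝ (w t) x (Pi.single i 1))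
              (fderiv ℝ (w t) x (Pi.single i 1)))
        (Set.Icc 0 T) t :=
  stmt13' η T hη hT u w p hu hw hp hup hwp hpp hdivu hdivw hpde
end
end

section
/- (Deterministic Kelvin Circulation Theorem.) Let v : [0,T] × ℝⁿ → ℝⁿ, ξ : [0,T] × ℝⁿ → ℝⁿ and p : [0,T] × ℝⁿ → ℝ be smooth with ∂_t ξ + ∇_{v}ξ + v'⊗ξ = ∇p on [0,T] × ℝⁿ, and let g : [0,T] × ℝⁿ → ℝⁿ be smooth with ∂_t g(t,x) = v(t, g(t,x)). Then for every smooth closed curve c : [0,1] → ℝⁿ with c(0) = c(1), the circulation t ↦ ∫₀¹ ⟨ξ(t, g(t, c(s))), ∂_s(g(t, c(s)))⟩ ds is constant in t on [0,T]. -/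
noncomputable section
open MeasureTheory

section KelvinHelpers
open Set
set_option maxHeartbeats 1000000

variable {E F : Type*} [NormedAddCommGroup E] [NormedSpace ℝ E]
  [NormedAddCommGroup F] [NormedSpace ℝ F]

-- slice in x is smooth
lemma slice_contDiff {T : ℝ} {f : ℝ → E → F}
    (hf : ContDiffOn ℝ (⊤:ℕ∞) (fun z : ℝ × E => f z.1 z.2) (Set.Icc 0 T ×ˢ Set.univ))
    {t : ℝ} (ht : t ∈ Set.Icc (0:ℝ) T) : ContDiff ℝ (⊤:ℕ∞) (f t) := by
  rw [← contDiffOn_univ]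
  have hι : ContDiff ℝ (⊤:ℕ∞) (fun x : E => ((t, x) : ℝ × E)) :=
    contDiff_const.prodMk contDiff_id
  exact hf.comp (hι.contDiffOn (s := Set.univ)) (fun x _ => ⟨ht, trivial⟩)

lemma joint_contDiffAt {T : ℝ} {f : ℝ → E → F}
    (hf : ContDiffOn ℝ (⊤:ℕ∞) (fun z : ℝ × E => f z.1 z.2) (Set.Icc 0 T ×ˢ Set.univ))
    {t : ℝ} (ht : t ∈ Set.Ioo (0:ℝ) T) (x : E) :
    ContDiffAt ℝ (⊤:ℕ∞) (fun z : ℝ × E => f z.1 z.2) (t, x) := by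
  apply hf.contDiffAt
  have hopen : IsOpen (Set.Ioo (0:ℝ) T ×ˢ (Set.univ : Set E)) := isOpen_Ioo.prod isOpen_univ
  exact Filter.mem_of_superset (hopen.mem_nhds ⟨ht, trivial⟩)
    (Set.prod_mono Set.Ioo_subset_Icc_self le_rfl)

lemma hasDerivAt_slice_t {f : ℝ → E → F} {f' : ℝ × E →L[ℝ] F} {t : ℝ} {x : E}
    (hf : HasFDerivAt (fun z : ℝ × E => f z.1 z.2) f' (t, x)) :
    HasDerivAt (fun τ => f τ x) (f' (1, 0)) t := by
  have hcurve : HasDerivAt (fun τ : ℝ => ((τ, x) : ℝ × E)) ((1:ℝ), (0:E)) t :=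
    (hasDerivAt_id t).prodMk (hasDerivAt_const t x)
  exact hf.comp_hasDerivAt t hcurve

lemma hasFDerivAt_slice_x {f : ℝ → E → F} {f' : ℝ × E →L[ℝ] F} {t : ℝ} {x : E}
    (hf : HasFDerivAt (fun z : ℝ × E => f z.1 z.2) f' (t, x)) :
    HasFDerivAt (f t) (f'.comp (ContinuousLinearMap.inr ℝ ℝ E)) x := by
  have hι : HasFDerivAt (fun y : E => ((t, y) : ℝ × E)) (ContinuousLinearMap.inr ℝ ℝ E) x :=
    (hasFDerivAt_const t x).prodMk (hasFDerivAt_id x)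
  exact hf.comp x hι

lemma key_mixed {T : ℝ} {g v : ℝ → E → E}
    (hg : ContDiffOn ℝ (⊤:ℕ∞) (fun z : ℝ × E => g z.1 z.2) (Set.Icc 0 T ×ˢ Set.univ))
    (hflow : ∀ t ∈ Set.Ioo (0:ℝ) T, ∀ x, HasDerivAt (fun τ => g τ x) (v t (g t x)) t)
    {t : ℝ} (ht : t ∈ Set.Ioo (0:ℝ) T) (x₀ w : E) :
    HasDerivAt (fun τ => fderiv ℝ (g τ) x₀ w) (fderiv ℝ (fun y => v t (g t y)) x₀ w) t := by
  set G : ℝ × E → E := fun z => g z.1 z.2 with hG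
  -- the second derivative of G at (t, x₀)
  have hGat : ∀ {τ : ℝ}, τ ∈ Set.Ioo (0:ℝ) T → ∀ x : E, ContDiffAt ℝ (⊤:ℕ∞) G (τ, x) :=
    fun hτ x => joint_contDiffAt hg hτ x
  have hG2 : ContDiffAt ℝ (⊤:ℕ∞) (fderiv ℝ G) (t, x₀) := by
    apply (hGat ht x₀).fderiv_right (m := (⊤:ℕ∞))
    exact le_refl _
  set f'' : ℝ × E →L[ℝ] ℝ × E →L[ℝ] E := fderiv ℝ (fderiv ℝ G) (t, x₀) with hf''
  have hdG2 : HasFDerivAt (fderiv ℝ G) f'' (t, x₀) :=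
    (hG2.differentiableAt (by simp)).hasFDerivAt
  -- step 1 : t-derivative of τ ↦ fderiv ℝ G (τ, x₀), applied to (0, w)
  have step1 : HasDerivAt (fun τ => fderiv ℝ G (τ, x₀) ((0:ℝ), w)) (f'' (1, 0) (0, w)) t := by
    have h1 : HasDerivAt (fun τ => fderiv ℝ G (τ, x₀)) (f'' (1, 0)) t :=
      hasDerivAt_slice_t (f := fun τ x => fderiv ℝ G (τ, x)) hdG2
    have := h1.clm_apply (hasDerivAt_const t ((0:ℝ), w))
    simpa using this
  -- for τ near t, fderiv ℝ (g τ) x₀ w = fderiv ℝ G (τ, x₀) (0, w)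
  have heq : (fun τ => fderiv ℝ (g τ) x₀ w) =ᶠ[nhds t] fun τ => fderiv ℝ G (τ, x₀) ((0:ℝ), w) := by
    filter_upwards [isOpen_Ioo.mem_nhds ht] with τ hτ
    have hdiff : HasFDerivAt G (fderiv ℝ G (τ, x₀)) (τ, x₀) :=
      ((hGat hτ x₀).differentiableAt (by simp)).hasFDerivAt
    have := (hasFDerivAt_slice_x hdiff).fderiv
    rw [this]
    rfl
  -- symmetry of second derivatives
  have hsym : f'' (1, 0) (0, w) = f'' (0, w) (1, 0) := by
    have h2 : ((2:ℕ∞) : WithTop ℕ∞) ≤ ((⊤:ℕ∞) : WithTop ℕ∞) := by exact_mod_cast le_top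
    have := (hGat ht x₀).isSymmSndFDerivAt (by rw [minSmoothness_of_isRCLikeNormedField]; exact h2)
    exact this _ _
  -- identify f'' (0, w) (1, 0) with the spatial derivative of x ↦ v t (g t x)
  have step2 : f'' (0, w) (1, 0) = fderiv ℝ (fun y => v t (g t y)) x₀ w := by
    have hK : HasFDerivAt (fun x => fderiv ℝ G (t, x))
        (f''.comp (ContinuousLinearMap.inr ℝ ℝ E)) x₀ :=
      hasFDerivAt_slice_x (f := fun τ x => fderiv ℝ G (τ, x)) hdG2
    have hKapp := hK.clm_apply (hasFDerivAt_const ((1:ℝ), (0:E)) x₀)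
    have hfun : (fun x => fderiv ℝ G (t, x) ((1:ℝ), (0:E))) = fun x => v t (g t x) := by
      funext x
      have hdiff : HasFDerivAt G (fderiv ℝ G (t, x)) (t, x) :=
        ((hGat ht x).differentiableAt (by simp)).hasFDerivAt
      have h1 : HasDerivAt (fun τ => g τ x) (fderiv ℝ G (t, x) (1, 0)) t :=
        hasDerivAt_slice_t hdiff
      exact h1.unique (hflow t ht x)
    have h3 := hKapp.fderiv
    rw [hfun] at h3
    rw [h3]
    simp
  rw [hsym, step2] at step1
  exact step1.congr_of_eventuallyEq heq

-- composition with flow: material derivative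
lemma key_comp_flow {T : ℝ} {f : ℝ → E → F} {g v : ℝ → E → E} {ft : ℝ → E → F}
    (hf : ContDiffOn ℝ (⊤:ℕ∞) (fun z : ℝ × E => f z.1 z.2) (Set.Icc 0 T ×ˢ Set.univ))
    (hft : ∀ t ∈ Set.Ioo (0:ℝ) T, ∀ x, HasDerivAt (fun τ => f τ x) (ft t x) t)
    (hflow : ∀ t ∈ Set.Ioo (0:ℝ) T, ∀ x, HasDerivAt (fun τ => g τ x) (v t (g t x)) t)
    {t : ℝ} (ht : t ∈ Set.Ioo (0:ℝ) T) (x₀ : E) :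
    HasDerivAt (fun τ => f τ (g τ x₀))
      (ft t (g t x₀) + fderiv ℝ (f t) (g t x₀) (v t (g t x₀))) t := by
  set y := g t x₀ with hy
  have hFat : ContDiffAt ℝ (⊤:ℕ∞) (fun z : ℝ × E => f z.1 z.2) (t, y) :=
    joint_contDiffAt hf ht y
  have hdF : HasFDerivAt (fun z : ℝ × E => f z.1 z.2) (fderiv ℝ (fun z : ℝ × E => f z.1 z.2) (t, y)) (t, y) :=
    (hFat.differentiableAt (by simp)).hasFDerivAt
  set DF := fderiv ℝ (fun z : ℝ × E => f z.1 z.2) (t, y) with hDF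
  have hcurve : HasDerivAt (fun τ : ℝ => ((τ, g τ x₀) : ℝ × E)) ((1:ℝ), v t y) t :=
    (hasDerivAt_id t).prodMk (hflow t ht x₀)
  have hcomp : HasDerivAt (fun τ => f τ (g τ x₀)) (DF (1, v t y)) t := by
    have := hdF.comp_hasDerivAt t hcurve; exact this
  have hsplit : DF ((1:ℝ), v t y) = DF (1, 0) + DF (0, v t y) := by
    rw [← map_add]; norm_num
  have h1 : DF ((1:ℝ), (0:E)) = ft t y :=
    (hasDerivAt_slice_t hdF).unique (hft t ht y)
  have h2 : DF ((0:ℝ), v t y) = fderiv ℝ (f t) y (v t y) := by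
    rw [(hasFDerivAt_slice_x hdF).fderiv]; rfl
  rw [hsplit, h1, h2] at hcomp
  exact hcomp

-- representation of the spatial derivative via the within-derivative of the joint map
lemma fderiv_slice_eq {T : ℝ} {f : ℝ → E → F}
    (hf : ContDiffOn ℝ (⊤:ℕ∞) (fun z : ℝ × E => f z.1 z.2) (Set.Icc 0 T ×ˢ Set.univ))
    {t : ℝ} (ht : t ∈ Set.Icc (0:ℝ) T) (x : E) :
    fderiv ℝ (f t) x =
      (fderivWithin ℝ (fun z : ℝ × E => f z.1 z.2) (Set.Icc 0 T ×ˢ Set.univ) (t, x)).comp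
        (ContinuousLinearMap.inr ℝ ℝ E) := by
  have h1 : HasFDerivWithinAt (fun z : ℝ × E => f z.1 z.2)
      (fderivWithin ℝ (fun z : ℝ × E => f z.1 z.2) (Set.Icc 0 T ×ˢ Set.univ) (t, x))
      (Set.Icc 0 T ×ˢ Set.univ) (t, x) :=
    (hf.differentiableOn (by simp) (t, x) ⟨ht, trivial⟩).hasFDerivWithinAt
  have hι : HasFDerivWithinAt (fun y : E => ((t, y) : ℝ × E))
      (ContinuousLinearMap.inr ℝ ℝ E) Set.univ x :=
    ((hasFDerivAt_const t x).prodMk (hasFDerivAt_id x)).hasFDerivWithinAt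
  have := (h1.comp x hι (fun y _ => ⟨ht, trivial⟩))
  rw [hasFDerivWithinAt_univ] at this
  exact this.fderiv





lemma clm_pi_apply_s18 {n : ℕ} {F : Type*} [NormedAddCommGroup F] [NormedSpace ℝ F]
    (L : (Fin n → ℝ) →L[ℝ] F) (u : Fin n → ℝ) :
    L u = ∑ i, u i • L (Pi.single i 1) := by
  have hu : u = ∑ i, u i • (Pi.single i 1 : Fin n → ℝ) := by
    funext j
    simp [Finset.sum_apply, Pi.single_apply, Finset.sum_ite_eq', mul_comm]
  conv_lhs => rw [hu]
  rw [map_sum]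
  simp [_root_.map_smul]

lemma clm_apply_eq_dotp {n : ℕ} (L : (Fin n → ℝ) →L[ℝ] ℝ) (u : Fin n → ℝ) :
    L u = dotp (fun i => L (Pi.single i 1)) u := by
  rw [clm_pi_apply_s18]
  simp [dotp, mul_comm]

lemma dotp_clm_eq_dotp_stretch {n : ℕ} (L : (Fin n → ℝ) →L[ℝ] (Fin n → ℝ))
    (a u : Fin n → ℝ) :
    dotp a (L u) = dotp (fun i => ∑ j, L (Pi.single i 1) j * a j) u := by
  rw [clm_pi_apply_s18 L u]
  simp only [dotp, Finset.sum_apply, Pi.smul_apply, smul_eq_mul, Finset.mul_sum,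
    Finset.sum_mul]
  rw [Finset.sum_comm]
  congr 1; funext i; congr 1; funext j; ring

end KelvinHelpers

open Set in
set_option maxHeartbeats 1000000 in
/-- deterministic Kelvin Circulation Theorem: if
`∂_tξ + ∇_vξ + v'⊗ξ = ∇p` and `∂_t g(t,x) = v(t,g(t,x))`, then the circulation
`t ↦ ∫₀¹ ⟨ξ(t,g(t,c(s))), ∂_s g(t,c(s))⟩ ds` along any smooth closed curve `c`
is constant on `[0,T]`. -/
theorem stmt18 {n : ℕ} (T : ℝ) (hT : 0 < T)
    (v ξ g : ℝ → (Fin n → ℝ) → (Fin n → ℝ)) (p : ℝ → (Fin n → ℝ) → ℝ)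
    (c : ℝ → Fin n → ℝ)
    (hv : ContDiffOn ℝ (⊤:ℕ∞) (fun z : ℝ × (Fin n → ℝ) => v z.1 z.2)
      (Set.Icc 0 T ×ˢ Set.univ))
    (hξ : ContDiffOn ℝ (⊤:ℕ∞) (fun z : ℝ × (Fin n → ℝ) => ξ z.1 z.2)
      (Set.Icc 0 T ×ˢ Set.univ))
    (hp : ContDiffOn ℝ (⊤:ℕ∞) (fun z : ℝ × (Fin n → ℝ) => p z.1 z.2)
      (Set.Icc 0 T ×ˢ Set.univ))
    (hg : ContDiffOn ℝ (⊤:ℕ∞) (fun z : ℝ × (Fin n → ℝ) => g z.1 z.2)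
      (Set.Icc 0 T ×ˢ Set.univ))
    (hc : ContDiffOn ℝ (⊤:ℕ∞) c (Set.Icc 0 1)) (hclosed : c 0 = c 1)
    (hpde : ∀ t ∈ Set.Icc (0:ℝ) T, ∀ x,
      derivWithin (fun τ => ξ τ x) (Set.Icc 0 T) t
        + advDeriv (v t) (ξ t) x + lineStretch (v t) (ξ t) x = gradf (p t) x)
    (hflow : ∀ t ∈ Set.Icc (0:ℝ) T, ∀ x,
      derivWithin (fun τ => g τ x) (Set.Icc 0 T) t = v t (g t x)) :
    ∀ t₁ ∈ Set.Icc (0:ℝ) T, ∀ t₂ ∈ Set.Icc (0:ℝ) T,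
      (∫ s in (0:ℝ)..1,
        dotp (ξ t₁ (g t₁ (c s))) (derivWithin (fun σ => g t₁ (c σ)) (Set.Icc 0 1) s))
      = ∫ s in (0:ℝ)..1,
          dotp (ξ t₂ (g t₂ (c s))) (derivWithin (fun σ => g t₂ (c σ)) (Set.Icc 0 1) s) := by
  intro t₁ ht₁ t₂ ht₂
  set cder : ℝ → (Fin n → ℝ) := fun s => derivWithin c (Set.Icc 0 1) s with hcder
  set Φ : ℝ → ℝ → ℝ := fun t s => dotp (ξ t (g t (c s))) (fderiv ℝ (g t) (c s) (cder s))
    with hΦ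
  set Φ' : ℝ → ℝ → ℝ := fun t s => dotp (gradf (p t) (g t (c s)))
    (fderiv ℝ (g t) (c s) (cder s)) with hΦ'
  set Fc : ℝ → ℝ := fun t => ∫ s in (0:ℝ)..1, Φ t s with hFc
  -- basic facts
  have huIcc : Set.uIcc (0:ℝ) 1 = Set.Icc 0 1 := Set.uIcc_of_le zero_le_one
  have hu01 : UniqueDiffOn ℝ (Set.Icc (0:ℝ) 1) := uniqueDiffOn_Icc zero_lt_one
  have hUS : UniqueDiffOn ℝ (Set.Icc (0:ℝ) T ×ˢ (Set.univ : Set (Fin n → ℝ))) :=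
    (uniqueDiffOn_Icc hT).prod uniqueDiffOn_univ
  -- slice smoothness
  have hgt : ∀ t ∈ Set.Icc (0:ℝ) T, ContDiff ℝ (⊤:ℕ∞) (g t) := fun t ht => slice_contDiff hg ht
  have hvt : ∀ t ∈ Set.Icc (0:ℝ) T, ContDiff ℝ (⊤:ℕ∞) (v t) := fun t ht => slice_contDiff hv ht
  have hξt : ∀ t ∈ Set.Icc (0:ℝ) T, ContDiff ℝ (⊤:ℕ∞) (ξ t) := fun t ht => slice_contDiff hξ ht
  have hpt : ∀ t ∈ Set.Icc (0:ℝ) T, ContDiff ℝ (⊤:ℕ∞) (p t) := fun t ht => slice_contDiff hp ht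
  -- interior versions of the flow and PDE hypotheses
  have hflow' : ∀ t ∈ Set.Ioo (0:ℝ) T, ∀ x, HasDerivAt (fun τ => g τ x) (v t (g t x)) t := by
    intro t ht x
    have hmem : Set.Icc (0:ℝ) T ∈ nhds t := Icc_mem_nhds ht.1 ht.2
    have h1 : ContDiffAt ℝ (⊤:ℕ∞) (fun τ => g τ x) t := by
      have hcurve : ContDiff ℝ (⊤:ℕ∞) (fun τ : ℝ => ((τ, x) : ℝ × (Fin n → ℝ))) :=
        contDiff_id.prodMk contDiff_const
      exact (joint_contDiffAt hg ht x).comp t hcurve.contDiffAt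
    have hda := (h1.differentiableAt (by simp)).hasDerivAt
    rwa [← derivWithin_of_mem_nhds hmem, hflow t (Set.mem_Icc_of_Ioo ht) x] at hda
  have hpde' : ∀ t ∈ Set.Ioo (0:ℝ) T, ∀ x, HasDerivAt (fun τ => ξ τ x)
      (gradf (p t) x - advDeriv (v t) (ξ t) x - lineStretch (v t) (ξ t) x) t := by
    intro t ht x
    have hmem : Set.Icc (0:ℝ) T ∈ nhds t := Icc_mem_nhds ht.1 ht.2
    have h1 : ContDiffAt ℝ (⊤:ℕ∞) (fun τ => ξ τ x) t := by
      have hcurve : ContDiff ℝ (⊤:ℕ∞) (fun τ : ℝ => ((τ, x) : ℝ × (Fin n → ℝ))) :=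
        contDiff_id.prodMk contDiff_const
      exact (joint_contDiffAt hξ ht x).comp t hcurve.contDiffAt
    have hda := (h1.differentiableAt (by simp)).hasDerivAt
    have heq : derivWithin (fun τ => ξ τ x) (Set.Icc 0 T) t
        = gradf (p t) x - advDeriv (v t) (ξ t) x - lineStretch (v t) (ξ t) x := by
      have := hpde t (Set.mem_Icc_of_Ioo ht) x
      rw [← this]; abel
    rwa [← derivWithin_of_mem_nhds hmem, heq] at hda
  -- rewriting the circulation integral
  have hA : ∀ t ∈ Set.Icc (0:ℝ) T,
      (∫ s in (0:ℝ)..1,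
        dotp (ξ t (g t (c s))) (derivWithin (fun σ => g t (c σ)) (Set.Icc 0 1) s)) = Fc t := by
    intro t ht
    apply intervalIntegral.integral_congr
    intro s hs
    rw [huIcc] at hs
    have hcs : HasDerivWithinAt c (cder s) (Set.Icc 0 1) s :=
      ((hc.differentiableOn (by simp)) s hs).hasDerivWithinAt
    have hgd : HasFDerivAt (g t) (fderiv ℝ (g t) (c s)) (c s) :=
      (((hgt t ht).differentiable (by simp)) (c s)).hasFDerivAt
    have hcomp : HasDerivWithinAt (fun σ => g t (c σ))
        (fderiv ℝ (g t) (c s) (cder s)) (Set.Icc 0 1) s := hgd.comp_hasDerivWithinAt s hcs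
    show dotp (ξ t (g t (c s))) (derivWithin (fun σ => g t (c σ)) (Set.Icc 0 1) s) = Φ t s
    rw [hcomp.derivWithin (hu01 s hs)]
  -- joint continuity of Φ and Φ' on Icc 0 T × Icc 0 1
  have hQmaps : Set.MapsTo (fun q : ℝ × ℝ => ((q.1, c q.2) : ℝ × (Fin n → ℝ)))
      (Set.Icc 0 T ×ˢ Set.Icc 0 1) (Set.Icc 0 T ×ˢ (Set.univ : Set (Fin n → ℝ))) :=
    fun q hq => ⟨hq.1, trivial⟩
  have hm : ContinuousOn (fun q : ℝ × ℝ => ((q.1, c q.2) : ℝ × (Fin n → ℝ)))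
      (Set.Icc 0 T ×ˢ Set.Icc 0 1) := by
    apply ContinuousOn.prodMk continuousOn_fst
    exact hc.continuousOn.comp continuousOn_snd (fun q hq => hq.2)
  have hgc : ContinuousOn (fun q : ℝ × ℝ => g q.1 (c q.2)) (Set.Icc 0 T ×ˢ Set.Icc 0 1) :=
    hg.continuousOn.comp hm hQmaps
  have hm2 : ContinuousOn (fun q : ℝ × ℝ => ((q.1, g q.1 (c q.2)) : ℝ × (Fin n → ℝ)))
      (Set.Icc 0 T ×ˢ Set.Icc 0 1) := by
    apply ContinuousOn.prodMk continuousOn_fst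
    exact hgc
  have hm2maps : Set.MapsTo (fun q : ℝ × ℝ => ((q.1, g q.1 (c q.2)) : ℝ × (Fin n → ℝ)))
      (Set.Icc 0 T ×ˢ Set.Icc 0 1) (Set.Icc 0 T ×ˢ (Set.univ : Set (Fin n → ℝ))) :=
    fun q hq => ⟨hq.1, trivial⟩
  have hcd : ContinuousOn cder (Set.Icc 0 1) :=
    hc.continuousOn_derivWithin hu01 (by exact_mod_cast le_top)
  have hDg : ContinuousOn (fun q : ℝ × ℝ => fderiv ℝ (g q.1) (c q.2))
      (Set.Icc 0 T ×ˢ Set.Icc 0 1) := by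
    have hgW : ContinuousOn
        (fderivWithin ℝ (fun z : ℝ × (Fin n → ℝ) => g z.1 z.2) (Set.Icc 0 T ×ˢ Set.univ))
        (Set.Icc 0 T ×ˢ Set.univ) :=
      hg.continuousOn_fderivWithin hUS (by exact_mod_cast le_top)
    have : ContinuousOn (fun q : ℝ × ℝ =>
        ((fderivWithin ℝ (fun z : ℝ × (Fin n → ℝ) => g z.1 z.2) (Set.Icc 0 T ×ˢ Set.univ)
          (q.1, c q.2)).comp (ContinuousLinearMap.inr ℝ ℝ (Fin n → ℝ))))
        (Set.Icc 0 T ×ˢ Set.Icc 0 1) :=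
      ContinuousOn.clm_comp (hgW.comp hm hQmaps) continuousOn_const
    apply this.congr
    intro q hq
    exact fderiv_slice_eq hg hq.1 (c q.2)
  have hb : ContinuousOn (fun q : ℝ × ℝ => fderiv ℝ (g q.1) (c q.2) (cder q.2))
      (Set.Icc 0 T ×ˢ Set.Icc 0 1) :=
    by exact hDg.clm_apply (hcd.comp continuousOn_snd (fun q hq => hq.2))
  have hξc : ContinuousOn (fun q : ℝ × ℝ => ξ q.1 (g q.1 (c q.2)))
      (Set.Icc 0 T ×ˢ Set.Icc 0 1) := hξ.continuousOn.comp hm2 hm2maps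
  have hgradc : ContinuousOn (fun q : ℝ × ℝ => gradf (p q.1) (g q.1 (c q.2)))
      (Set.Icc 0 T ×ˢ Set.Icc 0 1) := by
    have hpW : ContinuousOn
        (fderivWithin ℝ (fun z : ℝ × (Fin n → ℝ) => p z.1 z.2) (Set.Icc 0 T ×ˢ Set.univ))
        (Set.Icc 0 T ×ˢ Set.univ) :=
      hp.continuousOn_fderivWithin hUS (by exact_mod_cast le_top)
    have h1 : ContinuousOn (fun q : ℝ × ℝ =>
        (fderivWithin ℝ (fun z : ℝ × (Fin n → ℝ) => p z.1 z.2) (Set.Icc 0 T ×ˢ Set.univ)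
          (q.1, g q.1 (c q.2))).comp (ContinuousLinearMap.inr ℝ ℝ (Fin n → ℝ)))
        (Set.Icc 0 T ×ˢ Set.Icc 0 1) :=
      ContinuousOn.clm_comp (hpW.comp hm2 hm2maps) continuousOn_const
    have h2 : ContinuousOn (fun q : ℝ × ℝ => (fun i =>
        ((fderivWithin ℝ (fun z : ℝ × (Fin n → ℝ) => p z.1 z.2) (Set.Icc 0 T ×ˢ Set.univ)
          (q.1, g q.1 (c q.2))).comp (ContinuousLinearMap.inr ℝ ℝ (Fin n → ℝ))) (Pi.single i 1) : (Fin n → ℝ)))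
        (Set.Icc 0 T ×ˢ Set.Icc 0 1) := by
      apply continuousOn_pi.mpr
      intro i
      exact h1.clm_apply continuousOn_const
    apply h2.congr
    intro q hq
    funext i
    simp only [gradf]
    rw [fderiv_slice_eq hp hq.1 (g q.1 (c q.2))]
  have hdotp : ∀ {a b : ℝ × ℝ → (Fin n → ℝ)} {Q : Set (ℝ × ℝ)}, ContinuousOn a Q → ContinuousOn b Q →
      ContinuousOn (fun q => dotp (a q) (b q)) Q := by
    intro a b Q ha hb
    simp only [dotp]
    apply continuousOn_finset_sum
    intro i _
    exact (((continuous_apply i).comp_continuousOn ha)).mul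
      ((continuous_apply i).comp_continuousOn hb)
  have hΦc : ContinuousOn (fun q : ℝ × ℝ => Φ q.1 q.2) (Set.Icc 0 T ×ˢ Set.Icc 0 1) :=
    hdotp hξc hb
  have hΦ'c : ContinuousOn (fun q : ℝ × ℝ => Φ' q.1 q.2) (Set.Icc 0 T ×ˢ Set.Icc 0 1) :=
    hdotp hgradc hb
  -- slice continuity
  have hΦslice : ∀ t ∈ Set.Icc (0:ℝ) T, ContinuousOn (Φ t) (Set.Icc 0 1) := by
    intro t ht
    have : ContinuousOn (fun s : ℝ => ((t, s) : ℝ × ℝ)) (Set.Icc 0 1) :=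
      continuousOn_const.prodMk continuousOn_id
    exact hΦc.comp this (fun s hs => ⟨ht, hs⟩)
  have hΦ'slice : ∀ t ∈ Set.Icc (0:ℝ) T, ContinuousOn (Φ' t) (Set.Icc 0 1) := by
    intro t ht
    have : ContinuousOn (fun s : ℝ => ((t, s) : ℝ × ℝ)) (Set.Icc 0 1) :=
      continuousOn_const.prodMk continuousOn_id
    exact hΦ'c.comp this (fun s hs => ⟨ht, hs⟩)
  have hΦtslice : ∀ s ∈ Set.Icc (0:ℝ) 1, ContinuousOn (fun t => Φ t s) (Set.Icc 0 T) := by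
    intro s hs
    have : ContinuousOn (fun t : ℝ => ((t, s) : ℝ × ℝ)) (Set.Icc 0 T) :=
      continuousOn_id.prodMk continuousOn_const
    exact hΦc.comp this (fun t ht => ⟨ht, hs⟩)
  -- the core derivative computation
  have hcore : ∀ t ∈ Set.Ioo (0:ℝ) T, ∀ s ∈ Set.Icc (0:ℝ) 1,
      HasDerivAt (fun τ => Φ τ s) (Φ' t s) t := by
    intro t ht s hs
    have htIcc := Set.mem_Icc_of_Ioo ht
    set y := g t (c s) with hy
    have hAd : HasDerivAt (fun τ => ξ τ (g τ (c s)))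
        ((gradf (p t) y - advDeriv (v t) (ξ t) y - lineStretch (v t) (ξ t) y)
          + fderiv ℝ (ξ t) y (v t y)) t :=
      key_comp_flow hξ hpde' hflow' ht (c s)
    have ha' : (gradf (p t) y - advDeriv (v t) (ξ t) y - lineStretch (v t) (ξ t) y)
        + fderiv ℝ (ξ t) y (v t y) = gradf (p t) y - lineStretch (v t) (ξ t) y := by
      have h0 : fderiv ℝ (ξ t) y (v t y) = advDeriv (v t) (ξ t) y := rfl
      rw [h0]; abel
    rw [ha'] at hAd
    have hBd : HasDerivAt (fun τ => fderiv ℝ (g τ) (c s) (cder s))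
        (fderiv ℝ (fun z => v t (g t z)) (c s) (cder s)) t :=
      key_mixed hg hflow' ht (c s) (cder s)
    have hchain : fderiv ℝ (fun z => v t (g t z)) (c s)
        = (fderiv ℝ (v t) y).comp (fderiv ℝ (g t) (c s)) := by
      apply fderiv_comp
      · exact ((hvt t htIcc).differentiable (by simp)) y
      · exact ((hgt t htIcc).differentiable (by simp)) (c s)
    rw [hchain] at hBd
    have hAc : ∀ i, HasDerivAt (fun τ => ξ τ (g τ (c s)) i)
        ((gradf (p t) y - lineStretch (v t) (ξ t) y) i) t := by
      intro i
      have := (ContinuousLinearMap.proj (R := ℝ) (φ := fun _ : Fin n => ℝ)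
        i).hasFDerivAt.comp_hasDerivAt t hAd
      exact this
    have hBc : ∀ i, HasDerivAt (fun τ => fderiv ℝ (g τ) (c s) (cder s) i)
        (fderiv ℝ (v t) y (fderiv ℝ (g t) (c s) (cder s)) i) t := by
      intro i
      have := (ContinuousLinearMap.proj (R := ℝ) (φ := fun _ : Fin n => ℝ)
        i).hasFDerivAt.comp_hasDerivAt t hBd
      exact this
    have hsum : HasDerivAt
        (fun τ => ∑ i, (ξ τ (g τ (c s)) i) * (fderiv ℝ (g τ) (c s) (cder s) i))
        (∑ i, ((gradf (p t) y - lineStretch (v t) (ξ t) y) i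
            * (fderiv ℝ (g t) (c s) (cder s) i)
          + (ξ t (g t (c s)) i) * (fderiv ℝ (v t) y (fderiv ℝ (g t) (c s) (cder s)) i))) t :=
      HasDerivAt.fun_sum (fun i _ => (hAc i).mul (hBc i))
    have hval : (∑ i, ((gradf (p t) y - lineStretch (v t) (ξ t) y) i
            * (fderiv ℝ (g t) (c s) (cder s) i)
          + (ξ t (g t (c s)) i) * (fderiv ℝ (v t) y (fderiv ℝ (g t) (c s) (cder s)) i)))
        = Φ' t s := by
      have hstretch : dotp (ξ t y) (fderiv ℝ (v t) y (fderiv ℝ (g t) (c s) (cder s)))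
          = dotp (lineStretch (v t) (ξ t) y) (fderiv ℝ (g t) (c s) (cder s)) :=
        dotp_clm_eq_dotp_stretch (fderiv ℝ (v t) y) (ξ t y) (fderiv ℝ (g t) (c s) (cder s))
      show _ = dotp (gradf (p t) (g t (c s))) (fderiv ℝ (g t) (c s) (cder s))
      simp only [dotp] at hstretch ⊢
      rw [Finset.sum_add_distrib, hstretch, ← Finset.sum_add_distrib]
      apply Finset.sum_congr rfl
      intro i _
      simp only [Pi.sub_apply]
      ring
    have hsum' : HasDerivAt (fun τ => Φ τ s)
        (∑ i, ((gradf (p t) y - lineStretch (v t) (ξ t) y) i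
            * (fderiv ℝ (g t) (c s) (cder s) i)
          + (ξ t (g t (c s)) i) * (fderiv ℝ (v t) y (fderiv ℝ (g t) (c s) (cder s)) i))) t :=
      hsum
    rwa [hval] at hsum'
  -- the integral of Φ' over the closed curve vanishes
  have hzero : ∀ t₀ ∈ Set.Ioo (0:ℝ) T, (∫ s in (0:ℝ)..1, Φ' t₀ s) = 0 := by
    intro t₀ ht₀
    have htIcc := Set.mem_Icc_of_Ioo ht₀
    have hΨd : ∀ s ∈ Set.Icc (0:ℝ) 1,
        HasDerivWithinAt (fun σ => p t₀ (g t₀ (c σ))) (Φ' t₀ s) (Set.Icc 0 1) s := by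
      intro s hs
      have hcs : HasDerivWithinAt c (cder s) (Set.Icc 0 1) s :=
        ((hc.differentiableOn (by simp)) s hs).hasDerivWithinAt
      have hgd : HasFDerivAt (g t₀) (fderiv ℝ (g t₀) (c s)) (c s) :=
        (((hgt t₀ htIcc).differentiable (by simp)) (c s)).hasFDerivAt
      have hpd : HasFDerivAt (p t₀) (fderiv ℝ (p t₀) (g t₀ (c s))) (g t₀ (c s)) :=
        (((hpt t₀ htIcc).differentiable (by simp)) (g t₀ (c s))).hasFDerivAt
      have h1 : HasFDerivAt (fun z => p t₀ (g t₀ z))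
          ((fderiv ℝ (p t₀) (g t₀ (c s))).comp (fderiv ℝ (g t₀) (c s))) (c s) :=
        hpd.comp (c s) hgd
      have h2 := h1.comp_hasDerivWithinAt s hcs
      have hval : ((fderiv ℝ (p t₀) (g t₀ (c s))).comp (fderiv ℝ (g t₀) (c s))) (cder s)
          = Φ' t₀ s := by
        rw [ContinuousLinearMap.comp_apply]
        exact clm_apply_eq_dotp (fderiv ℝ (p t₀) (g t₀ (c s))) (fderiv ℝ (g t₀) (c s) (cder s))
      rwa [hval] at h2
    have h0 : (∫ s in (0:ℝ)..1, Φ' t₀ s)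
        = p t₀ (g t₀ (c 1)) - p t₀ (g t₀ (c 0)) := by
      apply intervalIntegral.integral_eq_sub_of_hasDeriv_right_of_le
        (f := fun σ => p t₀ (g t₀ (c σ))) (f' := Φ' t₀) zero_le_one
      · exact (((hpt t₀ htIcc).continuous.comp
          ((hgt t₀ htIcc).continuous)).comp_continuousOn hc.continuousOn)
      · intro s hs
        exact ((hΨd s (Set.mem_Icc_of_Ioo hs)).hasDerivAt
          (Icc_mem_nhds hs.1 hs.2)).hasDerivWithinAt
      · exact ContinuousOn.intervalIntegrable (by rw [huIcc]; exact hΦ'slice t₀ htIcc)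
    rw [h0, hclosed, sub_self]
  -- differentiation under the integral sign
  have hB0 : ∀ t₀ ∈ Set.Ioo (0:ℝ) T, HasDerivAt Fc 0 t₀ := by
    intro t₀ ht₀
    have htIcc := Set.mem_Icc_of_Ioo ht₀
    set ε := min t₀ (T - t₀) / 2 with hε
    have hεpos : 0 < ε := by
      have h1 : 0 < min t₀ (T - t₀) := lt_min ht₀.1 (by linarith [ht₀.2])
      positivity
    have hball : Metric.closedBall t₀ ε ⊆ Set.Ioo 0 T := by
      intro x hx
      rw [Metric.mem_closedBall, Real.dist_eq, abs_le] at hx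
      have h1 := min_le_left t₀ (T - t₀)
      have h2 := min_le_right t₀ (T - t₀)
      constructor
      · have := ht₀.1; simp only [hε] at hx ⊢; linarith [hx.1]
      · have := ht₀.2; simp only [hε] at hx ⊢; linarith [hx.2]
    have hIccsub : Set.Icc (t₀ - ε) (t₀ + ε) ⊆ Set.Ioo 0 T := by
      rw [← Real.closedBall_eq_Icc]; exact hball
    obtain ⟨C, hC⟩ := ((isCompact_Icc (a := t₀ - ε) (b := t₀ + ε)).prod
      (isCompact_Icc (a := (0:ℝ)) (b := 1))).exists_bound_of_continuousOn
      (hΦ'c.mono (Set.prod_mono (fun x hx => Set.mem_Icc_of_Ioo (hIccsub hx)) le_rfl))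
    have hIoc : Set.uIoc (0:ℝ) 1 = Set.Ioc 0 1 := Set.uIoc_of_le zero_le_one
    have key := intervalIntegral.hasDerivAt_integral_of_dominated_loc_of_deriv_le
      (F := Φ) (F' := Φ') (x₀ := t₀) (a := (0:ℝ)) (b := 1) (bound := fun _ => C)
      (μ := volume) (s := Metric.ball t₀ ε) (Metric.ball_mem_nhds t₀ hεpos)
      ?_ ?_ ?_ ?_ ?_ ?_
    · have h2 := key.2
      rwa [hzero t₀ ht₀] at h2
    · filter_upwards [isOpen_Ioo.mem_nhds ht₀] with t ht
      rw [hIoc]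
      exact ((hΦslice t (Set.mem_Icc_of_Ioo ht)).mono
        Set.Ioc_subset_Icc_self).aestronglyMeasurable measurableSet_Ioc
    · exact ContinuousOn.intervalIntegrable (by rw [huIcc]; exact hΦslice t₀ htIcc)
    · rw [hIoc]
      exact ((hΦ'slice t₀ htIcc).mono
        Set.Ioc_subset_Icc_self).aestronglyMeasurable measurableSet_Ioc
    · apply Filter.Eventually.of_forall
      intro s hs t htb
      rw [hIoc] at hs
      have ht1 : t ∈ Set.Icc (t₀ - ε) (t₀ + ε) := by
        rw [← Real.closedBall_eq_Icc]
        exact Metric.ball_subset_closedBall htb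
      exact hC (t, s) ⟨ht1, Set.Ioc_subset_Icc_self hs⟩
    · exact intervalIntegrable_const
    · apply Filter.Eventually.of_forall
      intro s hs t htb
      rw [hIoc] at hs
      exact hcore t (hball (Metric.ball_subset_closedBall htb)) s (Set.Ioc_subset_Icc_self hs)
  -- continuity of the circulation on [0, T]
  have hFcont : ContinuousOn Fc (Set.Icc 0 T) := by
    obtain ⟨M, hM⟩ := (isCompact_Icc.prod isCompact_Icc).exists_bound_of_continuousOn hΦc
    have hIoc : Set.uIoc (0:ℝ) 1 = Set.Ioc 0 1 := Set.uIoc_of_le zero_le_one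
    intro t₀ ht₀
    apply intervalIntegral.continuousWithinAt_of_dominated_interval (bound := fun _ => M)
    · filter_upwards [self_mem_nhdsWithin] with t ht
      rw [hIoc]
      exact ((hΦslice t ht).mono Set.Ioc_subset_Icc_self).aestronglyMeasurable
        measurableSet_Ioc
    · filter_upwards [self_mem_nhdsWithin] with t ht
      apply Filter.Eventually.of_forall
      intro s hs
      rw [hIoc] at hs
      exact hM (t, s) ⟨ht, Set.Ioc_subset_Icc_self hs⟩
    · exact intervalIntegrable_const
    · apply Filter.Eventually.of_forall
      intro s hs
      rw [hIoc] at hs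
      exact (hΦtslice s (Set.Ioc_subset_Icc_self hs)) t₀ ht₀
  -- constancy on the interior
  have hconst : ∀ a ∈ Set.Ioo (0:ℝ) T, ∀ b ∈ Set.Ioo (0:ℝ) T, Fc a = Fc b := by
    have haux : ∀ a ∈ Set.Ioo (0:ℝ) T, ∀ b ∈ Set.Ioo (0:ℝ) T, a ≤ b → Fc a = Fc b := by
      intro a ha b hb hab
      have hsub : Set.Icc a b ⊆ Set.Ioo 0 T := Set.Icc_subset_Ioo ha.1 hb.2
      have hcont : ContinuousOn Fc (Set.Icc a b) := fun x hx =>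
        ((hB0 x (hsub hx)).continuousAt).continuousWithinAt
      have hder : ∀ x ∈ Set.Ico a b, HasDerivWithinAt Fc 0 (Set.Ici x) x := fun x hx =>
        (hB0 x (hsub (Set.Ico_subset_Icc_self hx))).hasDerivWithinAt
      exact (constant_of_has_deriv_right_zero hcont hder b
        (Set.right_mem_Icc.mpr hab)).symm
    intro a ha b hb
    rcases le_total a b with h | h
    · exact haux a ha b hb h
    · exact (haux b hb a ha h).symm
  -- extension to the closed interval by continuity
  have hT2 : T / 2 ∈ Set.Ioo (0:ℝ) T := ⟨by linarith, by linarith⟩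
  have hext : ∀ a ∈ Set.Icc (0:ℝ) T, Fc a = Fc (T / 2) := by
    intro a ha
    by_cases haIoo : a ∈ Set.Ioo (0:ℝ) T
    · exact hconst a haIoo _ hT2
    · have hcl : a ∈ closure (Set.Ioo (0:ℝ) T) := by
        rw [closure_Ioo hT.ne]; exact ha
      have hne : (nhdsWithin a (Set.Ioo (0:ℝ) T)).NeBot :=
        mem_closure_iff_nhdsWithin_neBot.mp hcl
      have h1 : Filter.Tendsto Fc (nhdsWithin a (Set.Ioo 0 T)) (nhds (Fc a)) :=
        (hFcont a ha).mono Set.Ioo_subset_Icc_self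
      have h2 : Filter.Tendsto Fc (nhdsWithin a (Set.Ioo 0 T)) (nhds (Fc (T / 2))) := by
        apply Filter.Tendsto.congr' _ tendsto_const_nhds
        filter_upwards [self_mem_nhdsWithin] with x hx
        exact (hconst x hx _ hT2).symm
      exact tendsto_nhds_unique h1 h2
  rw [hA t₁ ht₁, hA t₂ ht₂, hext t₁ ht₁, hext t₂ ht₂]
end
end

section
/- Let n ≥ 2, s > 0, k ∈ ℝⁿ \ {0}, and let k₁^⊥, …, k_{n−1}^⊥ ∈ ℝⁿ be pairwise orthogonal with ⟨k_i^⊥, k⟩ = 0 and |k_i^⊥| = |k|, and define A_{(k,i)}(x) = |k|^{−(s+1)} cos⟨k,x⟩ k_i^⊥ and B_{(k,i)}(x) = |k|^{−(s+1)} sin⟨k,x⟩ k_i^⊥. Then for every x ∈ ℝⁿ and every w ∈ ℝⁿ: Σ_{i=1}^{n−1} ( |DA_{(k,i)}(x)·w|² + |DB_{(k,i)}(x)·w|² ) = (n−1) |k|^{−2s} ⟨k, w⟩², where DX(x)·w denotes the Jacobian matrix of the vector field X at x applied to w. -/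
noncomputable section
open MeasureTheory

/-- for the mode fields
`A_{(k,i)}(x) = |k|^{−(s+1)} cos⟨k,x⟩ k_i^⊥`, `B_{(k,i)}(x) = |k|^{−(s+1)} sin⟨k,x⟩ k_i^⊥`,
`Σ_{i=1}^{n−1} (|DA_{(k,i)}(x)·w|² + |DB_{(k,i)}(x)·w|²) = (n−1)|k|^{−2s}⟨k,w⟩²`.
Here `|k|^{−(s+1)} = (⟨k,k⟩)^{−(s+1)/2}` and `|k|^{−2s} = (⟨k,k⟩)^{−s}`. -/
theorem stmt19 {n : ℕ} (hn : 2 ≤ n) (s : ℝ) (hs : 0 < s)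
    (k : Fin n → ℝ) (hk : k ≠ 0)
    (v : Fin (n-1) → Fin n → ℝ)
    (horth : ∀ i j, i ≠ j → dotp (v i) (v j) = 0)
    (hvk : ∀ i, dotp (v i) k = 0)
    (hnorm : ∀ i, dotp (v i) (v i) = dotp k k)
    (A B : Fin (n-1) → (Fin n → ℝ) → (Fin n → ℝ))
    (hA : ∀ i x, A i x = (Real.rpow (dotp k k) (-(s+1)/2) * Real.cos (dotp k x)) • v i)
    (hB : ∀ i x, B i x = (Real.rpow (dotp k k) (-(s+1)/2) * Real.sin (dotp k x)) • v i)
    (x w : Fin n → ℝ) :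
    ∑ i, (dotp (fderiv ℝ (A i) x w) (fderiv ℝ (A i) x w)
          + dotp (fderiv ℝ (B i) x w) (fderiv ℝ (B i) x w))
      = ((n:ℝ) - 1) * Real.rpow (dotp k k) (-s) * (dotp k w)^2 := by

  have hkk : 0 < dotp k k := by
    have h : ∃ i, k i ≠ 0 := by
      by_contra h; push_neg at h; exact hk (funext h)
    obtain ⟨i0, hi0⟩ := h
    unfold dotp
    exact Finset.sum_pos' (fun i _ => mul_self_nonneg _)
      ⟨i0, Finset.mem_univ _, mul_self_pos.mpr hi0⟩
  set c : ℝ := Real.rpow (dotp k k) (-(s+1)/2) with hc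
  set L : (Fin n → ℝ) →L[ℝ] ℝ := ∑ j, k j • (ContinuousLinearMap.proj j) with hLdef
  have hLw : ∀ y, L y = dotp k y := by
    intro y
    simp [hLdef, ContinuousLinearMap.sum_apply, dotp]
  have hfun : (fun y => dotp k y) = ⇑L := by funext y; rw [hLw]
  have hL : HasFDerivAt (fun y => dotp k y) L x := by rw [hfun]; exact L.hasFDerivAt
  have hAw : ∀ i, fderiv ℝ (A i) x w = (c * -Real.sin (dotp k x) * dotp k w) • v i := by
    intro i
    have hgA : HasFDerivAt (fun y => c * Real.cos (dotp k y))
        ((c * -Real.sin (dotp k x)) • L) x := by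
      have := (hL.cos).const_mul c
      rw [smul_smul] at this
      exact this
    have hAi : HasFDerivAt (A i) (((c * -Real.sin (dotp k x)) • L).smulRight (v i)) x := by
      have : A i = fun y => (c * Real.cos (dotp k y)) • v i := by
        funext y; rw [hA]
      rw [this]
      exact hgA.smul_const (v i)
    rw [hAi.fderiv]
    simp [ContinuousLinearMap.smulRight_apply, hLw, smul_smul, mul_assoc]
  have hBw : ∀ i, fderiv ℝ (B i) x w = (c * Real.cos (dotp k x) * dotp k w) • v i := by
    intro i
    have hgB : HasFDerivAt (fun y => c * Real.sin (dotp k y))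
        ((c * Real.cos (dotp k x)) • L) x := by
      have := (hL.sin).const_mul c
      rw [smul_smul] at this
      exact this
    have hBi : HasFDerivAt (B i) (((c * Real.cos (dotp k x)) • L).smulRight (v i)) x := by
      have : B i = fun y => (c * Real.sin (dotp k y)) • v i := by
        funext y; rw [hB]
      rw [this]
      exact hgB.smul_const (v i)
    rw [hBi.fderiv]
    simp [ContinuousLinearMap.smulRight_apply, hLw, smul_smul, mul_assoc]
  have hds : ∀ (r : ℝ) (u : Fin n → ℝ), dotp (r • u) (r • u) = r^2 * dotp u u := by
    intro r u
    simp only [dotp, Pi.smul_apply, smul_eq_mul, Finset.mul_sum]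
    exact Finset.sum_congr rfl fun i _ => by ring
  have hterm : ∀ i : Fin (n-1),
      dotp (fderiv ℝ (A i) x w) (fderiv ℝ (A i) x w)
        + dotp (fderiv ℝ (B i) x w) (fderiv ℝ (B i) x w)
      = c^2 * (dotp k w)^2 * dotp k k := by
    intro i
    rw [hAw i, hBw i, hds, hds, hnorm i]
    have htrig : Real.sin (dotp k x)^2 + Real.cos (dotp k x)^2 = 1 :=
      Real.sin_sq_add_cos_sq _
    linear_combination (c^2 * dotp k w ^2 * dotp k k) * htrig
  rw [Finset.sum_congr rfl fun i _ => hterm i, Finset.sum_const]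
  have hcard : (Finset.univ : Finset (Fin (n-1))).card = n - 1 := by simp
  rw [hcard, nsmul_eq_mul]
  have hcast : ((n - 1 : ℕ) : ℝ) = (n : ℝ) - 1 := by
    rw [Nat.cast_sub (by omega)]; simp
  rw [hcast]
  have hpow : c^2 * dotp k k = Real.rpow (dotp k k) (-s) := by
    rw [hc]
    show ((dotp k k) ^ (-(s+1)/2)) ^ (2:ℕ) * dotp k k = (dotp k k) ^ (-s)
    rw [← Real.rpow_natCast ((dotp k k) ^ (-(s+1)/2)) 2, ← Real.rpow_mul hkk.le]
    nth_rewrite 2 [← Real.rpow_one (dotp k k)]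
    rw [← Real.rpow_add hkk]
    norm_num
  rw [← hpow]
  ring
end
end
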